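/- arXiv:2402.16207 — 2 statements merged into one kernel-verified Lean document; each statement's English description precedes it below -/
import Mathlib

section
/- Let x ∈ ℤ^P be a lattice point of the type B poset polytope 𝒬^B_O(λ) where λ = (a₁,…,a_n) is integral dominant with a_n even. Then there exist unique order ideals J₁ ⊆ … ⊆ J_m in P and a set D ⊆ [1,n] such that x = x^{J₁,∅} + … + x^{J_{m−1},∅} + x^{J_m,D}, where for k ≤ n−1 exactly a_k of the J_i lie in 𝒥ₖ and a_n/2 of them lie in 𝒥ₙ. -/
open scoped Classical Pointwise

noncomputable section

/-- Position of `j` in the total order `1 ⋖ … ⋖ n ⋖ -n ⋖ … ⋖ -1` on `N`. -/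
def ordKey (n : ℕ) (j : ℤ) : ℤ := if 0 < j then j else 2 * n + 1 + j

/-- Membership in the type C Gelfand–Tsetlin poset `P`:
pairs `(i,j)` with `1 ≤ i ≤ n` and `i ≤ |j| ≤ n`. -/
def inP (n : ℕ) (p : ℤ × ℤ) : Prop :=
  1 ≤ p.1 ∧ p.1 ≤ (n : ℤ) ∧ p.1 ≤ |p.2| ∧ |p.2| ≤ (n : ℤ)

/-- The order relation `⪯` of `P`: `(i₁,j₁) ⪯ (i₂,j₂)` iff `i₁ ≤ i₂` and `j₁ ⩽̇ j₂`. -/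
def ple (n : ℕ) (p q : ℤ × ℤ) : Prop :=
  p.1 ≤ q.1 ∧ ordKey n p.2 ≤ ordKey n q.2

/-- Strict version of `⪯`. -/
def plt (n : ℕ) (p q : ℤ × ℤ) : Prop := ple n p q ∧ p ≠ q

/-- The elements of `N = {1,…,n,-n,…,-1}` listed in increasing `⋖` order. -/
def jList (n : ℕ) : List ℤ :=
  ((List.range n).map fun t => (t : ℤ) + 1) ++ ((List.range n).map fun t => (t : ℤ) - n)

/-- All pairs `(i,j)` with `i ∈ [1,n]`, `j ∈ N`, ordered first by `i` increasing,
then by `j` increasing with respect to `⋖`. -/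
def posList (n : ℕ) : List (ℤ × ℤ) :=
  (List.range n).flatMap fun a => (jList n).map fun j => ((a : ℤ) + 1, j)

/-- `P` as a finite set. -/
def Pfin (n : ℕ) : Finset (ℤ × ℤ) := (posList n).toFinset.filter (inP n)

/-- `N` as a finite set. -/
def Nfin (n : ℕ) : Finset ℤ := (jList n).toFinset

/-- The diagonal `A = {(i,i) : 1 ≤ i ≤ n}`. -/
def Aset (n : ℕ) : Finset (ℤ × ℤ) :=
  (Finset.range n).image fun t => (((t : ℤ) + 1, (t : ℤ) + 1) : ℤ × ℤ)

/-- Order ideals (downward closed subsets) of `P`. -/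
def IsIdeal (n : ℕ) (J : Finset (ℤ × ℤ)) : Prop :=
  (∀ p ∈ J, inP n p) ∧ ∀ p ∈ J, ∀ q ∈ Pfin n, ple n q p → q ∈ J

/-- The set of `≺`-maximal elements of `J`. -/
def maxPrec (n : ℕ) (J : Finset (ℤ × ℤ)) : Finset (ℤ × ℤ) :=
  J.filter fun p => ∀ q ∈ J, ple n p q → q = p

/-- `M_O(J) = (J ∩ O) ∪ max_≺(J)`. -/
def MO (n : ℕ) (O J : Finset (ℤ × ℤ)) : Finset (ℤ × ℤ) := (J ∩ O) ∪ maxPrec n J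

/-- The permutation `w_M`: the product of the transpositions `s_{i,j}` over `(i,j) ∈ M`,
ordered first by `i` increasing and then by `j` increasing with respect to `⋖`
(the leftmost factor acts last). -/
def wPerm (n : ℕ) (M : Finset (ℤ × ℤ)) : Equiv.Perm ℤ :=
  (((posList n).filter fun p => decide (p ∈ M)).map fun p => Equiv.swap p.1 p.2).prod

/-- `w^{O,J} = w_O⁻¹ ⬝ w_{M_O(J)}`. -/
def wOJ (n : ℕ) (O J : Finset (ℤ × ℤ)) : Equiv.Perm ℤ :=
  (wPerm n O)⁻¹ * wPerm n (MO n O J)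

/-- The principal order ideal `⟨i,j⟩` of `(i,j) ∈ P`. -/
def princ (n : ℕ) (p : ℤ × ℤ) : Finset (ℤ × ℤ) := (Pfin n).filter fun q => ple n q p

/-- `r(i,j) = w^{O,⟨i,j⟩}(i)`. -/
def rMap (n : ℕ) (O : Finset (ℤ × ℤ)) (i j : ℤ) : ℤ := wOJ n O (princ n (i, j)) i

/-- Inverse of `ordKey` (on the relevant range `[1, 2n]`). -/
def invOrdKey (n : ℕ) (t : ℤ) : ℤ := if t ≤ (n : ℤ) then t else t - (2 * n + 1)

/-- The `⋖`-maximal `j'` with `j' ⋖ j` and `(i,j') ∈ O`. -/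
def prevO (n : ℕ) (O : Finset (ℤ × ℤ)) (i j : ℤ) : ℤ :=
  invOrdKey n (WithBot.unbotD 0 ((((Nfin n).filter fun j' => (i, j') ∈ O ∧ ordKey n j' < ordKey n j).image
    (ordKey n)).max))

/-- The pipe-dream linear transform `ξ` of `ℝ^P` (coordinates outside `P` are untouched):
`ξ(ε_{i,i}) = ε_{i,r(i,i)}` and `ξ(ε_{i,j}) = ε_{i,r(i,j)} - ε_{i,r(i,j')}` for `j ≠ i`,
where `j'` is `⋖`-maximal with `j' ⋖ j` and `(i,j') ∈ O`. -/
def xiMap (n : ℕ) (O : Finset (ℤ × ℤ)) (x : (ℤ × ℤ) → ℝ) : (ℤ × ℤ) → ℝ := fun q =>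
  if inP n q then
    (∑ j ∈ (Nfin n).filter (fun j => inP n (q.1, j) ∧ rMap n O q.1 j = q.2), x (q.1, j))
    - (∑ j ∈ (Nfin n).filter
        (fun j => inP n (q.1, j) ∧ j ≠ q.1 ∧ rMap n O q.1 (prevO n O q.1 j) = q.2), x (q.1, j))
  else x q

/-- Indicator vector `1_{M_O(J)} ∈ ℝ^P`. -/
def indicMO (n : ℕ) (O J : Finset (ℤ × ℤ)) : (ℤ × ℤ) → ℝ := fun p =>
  if p ∈ MO n O J then 1 else 0

/-- The fundamental marked chain-order polytope `𝒬_O(ω_k)`: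
the convex hull of the vectors `1_{M_O(J)}`, `J ∈ 𝒥ₖ`. -/
def QOfund (n : ℕ) (O : Finset (ℤ × ℤ)) (k : ℕ) : Set ((ℤ × ℤ) → ℝ) :=
  convexHull ℝ {x | ∃ J : Finset (ℤ × ℤ),
    IsIdeal n J ∧ (J ∩ Aset n).card = k ∧ x = indicMO n O J}

/-- The marked chain-order polytope `𝒬_O(λ)` for `λ = a₁ω₁ + … + a_nω_n`:
the Minkowski sum `a₁𝒬_O(ω₁) + … + a_n𝒬_O(ω_n)`. -/
def QO (n : ℕ) (O : Finset (ℤ × ℤ)) (a : ℕ → ℕ) : Set ((ℤ × ℤ) → ℝ) :=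
  ∑ k ∈ Finset.Icc 1 n, a k • QOfund n O k

/-- Integrality (lattice point) predicate. -/
def IsLat (x : (ℤ × ℤ) → ℝ) : Prop := ∀ p, ∃ m : ℤ, x p = m

/-- Type B: `λ(i) = a_i + … + a_{n-1} + a_n/2`. -/
def lamB (n : ℕ) (a : ℕ → ℕ) (i : ℤ) : ℝ :=
  (∑ t ∈ Finset.Icc i.toNat (n - 1), (a t : ℝ)) + (a n : ℝ) / 2

/-- The type B poset polytope `𝒬^B_O(λ)` (H-description with factor `1/2`
on the coordinates in `B = {(i,-i)}`). -/
def QB (n : ℕ) (O : Finset (ℤ × ℤ)) (lam : ℤ → ℝ) : Set ((ℤ × ℤ) → ℝ) :=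
  {x | (∀ i : ℤ, 1 ≤ i → i ≤ (n : ℤ) → x (i, i) = lam i) ∧
    (∀ p, inP n p → 0 ≤ x p) ∧ (∀ p, ¬ inP n p → x p = 0) ∧
    ∀ (pq rs : ℤ × ℤ) (c : List (ℤ × ℤ)), pq ∈ O → inP n rs →
      (∀ q ∈ c, inP n q ∧ q ∉ O) →
      List.Chain' (plt n) (pq :: (c ++ [rs])) →
      (c.map x).sum ≤ x pq - (if rs.2 = -rs.1 then (1 : ℝ) / 2 else 1) * x rs}

/-- The point `x^{J,D}`. -/
def xJD (n : ℕ) (O J : Finset (ℤ × ℤ)) (D : Finset ℤ) : (ℤ × ℤ) → ℝ := fun p =>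
  if p ∈ MO n O J then (if p.2 = -p.1 ∧ p.1 ∉ D then 2 else 1) else 0

/-- The projection `π : ℝ^P → ℝ^{P∖A}` (realized by zeroing the `A`-coordinates). -/
def piA (x : (ℤ × ℤ) → ℝ) : (ℤ × ℤ) → ℝ := fun p => if p.2 = p.1 then 0 else x p

/-- The transformed type B poset polytope `Π^B_O(λ) = πξ(𝒬^B_O(λ))`. -/
def PiB (n : ℕ) (O : Finset (ℤ × ℤ)) (a : ℕ → ℕ) : Set ((ℤ × ℤ) → ℝ) :=
  (fun x => piA (xiMap n O x)) '' QB n O (lamB n a)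

/-- The point `y^D ∈ ℝ^{P∖A}`. -/
def yD (D : Finset ℤ) : (ℤ × ℤ) → ℝ := fun p => if p.2 = -p.1 ∧ p.1 ∈ D then 1 else 0


/-! ### Auxiliary development for Statement 14 -/

section Stmt14Aux

/-- rank of a position; strictly increasing along `plt` within `P`. -/
def rankP (n : ℕ) (p : ℤ × ℤ) : ℕ := (p.1 + ordKey n p.2).toNat

/-- the set of elements of `P` strictly above `p`. -/
def upSet (n : ℕ) (p : ℤ × ℤ) : Finset (ℤ × ℤ) := (Pfin n).filter (fun q => plt n p q)

lemma mem_jList {n : ℕ} {j : ℤ} : j ∈ jList n ↔ (1 ≤ j ∧ j ≤ n) ∨ (-n ≤ j ∧ j ≤ -1) := by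
  simp [jList]
  constructor
  · rintro (⟨s, hs, rfl⟩ | ⟨s, hs, rfl⟩)
    · left; constructor <;> omega
    · right; constructor <;> omega
  · rintro (⟨h1, h2⟩ | ⟨h1, h2⟩)
    · exact Or.inl ⟨(j - 1).toNat, by omega, by omega⟩
    · exact Or.inr ⟨(j + n).toNat, by omega, by omega⟩

lemma mem_Pfin {n : ℕ} {p : ℤ × ℤ} : p ∈ Pfin n ↔ inP n p := by
  constructor
  · intro h; exact (Finset.mem_filter.1 h).2
  · intro h
    refine Finset.mem_filter.2 ⟨?_, h⟩
    obtain ⟨h1, h2, h3, h4⟩ := h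
    simp only [posList, List.mem_toFinset, List.mem_flatMap, List.mem_map, List.mem_range]
    refine ⟨p.1 - 1, by simp; exact ⟨(p.1 - 1).toNat, by omega, by omega⟩, p.2, ?_, ?_⟩
    · rw [mem_jList]
      rcases abs_cases p.2 with ⟨he, _⟩ | ⟨he, _⟩ <;> omega
    · simp

lemma ordKey_bounds {n : ℕ} {j : ℤ} (h1 : 1 ≤ |j|) (h2 : |j| ≤ n) :
    1 ≤ ordKey n j ∧ ordKey n j ≤ 2 * n := by
  unfold ordKey
  rcases abs_cases j with ⟨he, _⟩ | ⟨he, _⟩ <;> split <;> omega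

lemma ordKey_inj {n : ℕ} {j j' : ℤ} (h1 : 1 ≤ |j|) (h2 : |j| ≤ n) (h1' : 1 ≤ |j'|)
    (h2' : |j'| ≤ n) (h : ordKey n j = ordKey n j') : j = j' := by
  unfold ordKey at h
  rcases abs_cases j with ⟨he, _⟩ | ⟨he, _⟩ <;> rcases abs_cases j' with ⟨he', _⟩ | ⟨he', _⟩ <;>
    split at h <;> split at h <;> omega

lemma rankP_lt {n : ℕ} {p q : ℤ × ℤ} (hp : inP n p) (hq : inP n q) (h : plt n p q) :
    rankP n p < rankP n q := by
  obtain ⟨⟨hle1, hle2⟩, hne⟩ := h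
  obtain ⟨hp1, hp2, hp3, hp4⟩ := hp
  obtain ⟨hq1, hq2, hq3, hq4⟩ := hq
  have hob := ordKey_bounds (n := n) (j := p.2) (by omega) hp4
  have hob' := ordKey_bounds (n := n) (j := q.2) (by omega) hq4
  have : p.1 + ordKey n p.2 < q.1 + ordKey n q.2 := by
    rcases lt_or_eq_of_le hle1 with h | h
    · omega
    · rcases lt_or_eq_of_le hle2 with h' | h'
      · omega
      · exfalso
        exact hne (Prod.ext h (ordKey_inj (by omega) hp4 (by omega) hq4 h'))
  unfold rankP; omega

lemma rankP_bounds {n : ℕ} {p : ℤ × ℤ} (hp : inP n p) : 2 ≤ rankP n p ∧ rankP n p ≤ 3 * n := by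
  obtain ⟨hp1, hp2, hp3, hp4⟩ := hp
  have hob := ordKey_bounds (n := n) (j := p.2) (by omega) hp4
  unfold rankP; omega

/-- `(p.1, -p.1)` is an element of `P` strictly above `p`, whenever `p ∈ P ∖ B`. -/
lemma upSet_mem_B {n : ℕ} {p : ℤ × ℤ} (hp : inP n p) (hpb : p.2 ≠ -p.1) :
    (p.1, -p.1) ∈ upSet n p := by
  obtain ⟨hp1, hp2, hp3, hp4⟩ := hp
  have hin : inP n (p.1, -p.1) := by
    refine ⟨hp1, hp2, ?_, ?_⟩ <;> simp only [abs_of_nonpos (by omega : -p.1 ≤ 0), neg_neg] <;>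
      omega
  refine Finset.mem_filter.2 ⟨mem_Pfin.2 hin, ⟨⟨le_refl _, ?_⟩, ?_⟩⟩
  · show ordKey n p.2 ≤ ordKey n (-p.1)
    unfold ordKey
    rcases abs_cases p.2 with ⟨he, _⟩ | ⟨he, _⟩ <;> split <;> split <;> omega
  · intro h; exact hpb (congrArg Prod.snd h)

lemma upSet_nonempty {n : ℕ} {p : ℤ × ℤ} (hp : inP n p) (hpb : p.2 ≠ -p.1) :
    (upSet n p).Nonempty := ⟨_, upSet_mem_B hp hpb⟩

/-- Elements of `B` are maximal in `P`. -/
lemma B_max {n : ℕ} {p q : ℤ × ℤ} (hp : inP n p) (hpb : p.2 = -p.1) (hq : inP n q)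
    (h : ple n p q) : q = p := by
  obtain ⟨hp1, hp2, hp3, hp4⟩ := hp
  obtain ⟨hq1, hq2, hq3, hq4⟩ := hq
  obtain ⟨hle1, hle2⟩ := h
  unfold ordKey at hle2
  have : q.2 = p.2 ∧ q.1 = p.1 := by
    rcases abs_cases p.2 with ⟨he, _⟩ | ⟨he, _⟩ <;> rcases abs_cases q.2 with ⟨he', _⟩ | ⟨he', _⟩ <;>
      split at hle2 <;> split at hle2 <;> omega
  exact Prod.ext this.2 this.1

/-- `(1,1)` is the least element of `P`. -/
lemma least_11 {n : ℕ} {p : ℤ × ℤ} (hp : inP n p) : ple n (1, 1) p := by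
  obtain ⟨hp1, hp2, hp3, hp4⟩ := hp
  have hob := ordKey_bounds (n := n) (j := p.2) (by omega) hp4
  refine ⟨hp1, ?_⟩
  show ordKey n 1 ≤ ordKey n p.2
  have : ordKey n 1 = 1 := by unfold ordKey; split <;> omega
  omega

lemma inP_11 {n : ℕ} (hn : 1 ≤ n) : inP n ((1 : ℤ), (1 : ℤ)) := by
  refine ⟨le_refl _, ?_, by norm_num, ?_⟩
  · show (1 : ℤ) ≤ (n : ℤ); exact_mod_cast hn
  · show |(1 : ℤ)| ≤ (n : ℤ); rw [abs_one]; exact_mod_cast hn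

lemma mem_Aset {n : ℕ} {p : ℤ × ℤ} : p ∈ Aset n ↔ ∃ k : ℤ, 1 ≤ k ∧ k ≤ n ∧ p = (k, k) := by
  simp [Aset]
  constructor
  · rintro ⟨t, ht, rfl⟩
    exact ⟨(t : ℤ) + 1, by omega, by omega, rfl⟩
  · rintro ⟨k, h1, h2, rfl⟩
    refine ⟨(k - 1).toNat, by omega, ?_⟩
    have : ((k - 1).toNat : ℤ) + 1 = k := by omega
    rw [this]

lemma mem_O_11 {n : ℕ} (hn : 1 ≤ n) {O : Finset (ℤ × ℤ)} (hA : Aset n ⊆ O) :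
    ((1 : ℤ), (1 : ℤ)) ∈ O :=
  hA (mem_Aset.2 ⟨1, le_refl _, by exact_mod_cast hn, rfl⟩)

/-- Fuel-based recursion for the entry-time function. -/
def eF (n : ℕ) (O : Finset (ℤ × ℤ)) (g : ℤ × ℤ → ℤ) (m : ℤ) : ℕ → (ℤ × ℤ) → ℤ
  | 0 => fun _ => 0
  | (f + 1) => fun p =>
    if p ∈ O then m + 1 - g p
    else if p.2 = -p.1 then m + 1 - (g p + 1) / 2
    else (if h : (upSet n p).Nonempty then (upSet n p).inf' h (eF n O g m f) else 0) - g p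

/-- The entry-time function. -/
def eE (n : ℕ) (O : Finset (ℤ × ℤ)) (g : ℤ × ℤ → ℤ) (m : ℤ) : (ℤ × ℤ) → ℤ :=
  eF n O g m (3 * n + 1)

lemma eF_stable_step (n : ℕ) (O : Finset (ℤ × ℤ)) (g : ℤ × ℤ → ℤ) (m : ℤ) :
    ∀ f : ℕ, ∀ p : ℤ × ℤ, inP n p → 3 * n ≤ rankP n p + f →
      eF n O g m (f + 1) p = eF n O g m (f + 2) p := by
  intro f
  induction f with
  | zero =>
    intro p hp hr
    have hne : ¬ (upSet n p).Nonempty := by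
      rintro ⟨q, hq⟩
      have hq' := Finset.mem_filter.1 hq
      have h1 := rankP_lt hp (mem_Pfin.1 hq'.1) hq'.2
      have h2 := rankP_bounds (mem_Pfin.1 hq'.1)
      omega
    show eF n O g m 1 p = eF n O g m 2 p
    unfold eF
    split
    · rfl
    · split
      · rfl
      · rfl
  | succ f ih =>
    intro p hp hr
    show eF n O g m (f + 2) p = eF n O g m (f + 3) p
    unfold eF
    split
    · rfl
    · split
      · rfl
      · split
        case isTrue h =>
          congr 1
          refine Finset.inf'_congr h rfl ?_
          intro q hq
          have hq' := Finset.mem_filter.1 hq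
          have h1 := rankP_lt hp (mem_Pfin.1 hq'.1) hq'.2
          exact ih q (mem_Pfin.1 hq'.1) (by omega)
        case isFalse h => rfl

lemma eF_stable (n : ℕ) (O : Finset (ℤ × ℤ)) (g : ℤ × ℤ → ℤ) (m : ℤ) :
    ∀ (k f : ℕ), ∀ p : ℤ × ℤ, inP n p → 3 * n ≤ rankP n p + f →
      eF n O g m (f + 1) p = eF n O g m (f + 1 + k) p := by
  intro k
  induction k with
  | zero => intro f p _ _; rfl
  | succ k ih =>
    intro f p hp hr
    rw [ih f p hp hr]
    have h2 : f + 1 + k = (f + k) + 1 := by omega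
    rw [h2, eF_stable_step n O g m (f + k) p hp (by omega)]
    have h3 : f + k + 2 = f + 1 + (k + 1) := by omega
    rw [h3]

lemma eE_eq_eF (n : ℕ) (O : Finset (ℤ × ℤ)) (g : ℤ × ℤ → ℤ) (m : ℤ)
    {p : ℤ × ℤ} (hp : inP n p) : eE n O g m p = eF n O g m (3 * n) p := by
  have h2 := rankP_bounds hp
  have h0 : 1 ≤ n := by
    by_contra h
    have : n = 0 := by omega
    subst this
    omega
  have hst := eF_stable n O g m 1 (3 * n - 1) p hp (by omega)
  have e1 : 3 * n - 1 + 1 = 3 * n := by omega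
  have e2 : 3 * n - 1 + 1 + 1 = 3 * n + 1 := by omega
  rw [e1] at hst
  exact hst.symm

lemma eE_eq_O {n : ℕ} {O : Finset (ℤ × ℤ)} {g : ℤ × ℤ → ℤ} {m : ℤ} {p : ℤ × ℤ}
    (hp : p ∈ O) : eE n O g m p = m + 1 - g p := by
  show eF n O g m (3 * n + 1) p = _
  unfold eF
  rw [if_pos hp]

lemma eE_eq_B {n : ℕ} {O : Finset (ℤ × ℤ)} {g : ℤ × ℤ → ℤ} {m : ℤ} {p : ℤ × ℤ}
    (hp : p ∉ O) (hb : p.2 = -p.1) : eE n O g m p = m + 1 - (g p + 1) / 2 := by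
  show eF n O g m (3 * n + 1) p = _
  unfold eF
  rw [if_neg hp, if_pos hb]

lemma eE_eq_rest (n : ℕ) (O : Finset (ℤ × ℤ)) (g : ℤ × ℤ → ℤ) (m : ℤ)
    {p : ℤ × ℤ} (hpP : inP n p) (hp : p ∉ O) (hb : p.2 ≠ -p.1) :
    eE n O g m p = (upSet n p).inf' (upSet_nonempty hpP hb) (eE n O g m) - g p := by
  show eF n O g m (3 * n + 1) p = _
  unfold eF
  rw [if_neg hp, if_neg hb, dif_pos (upSet_nonempty hpP hb)]
  congr 1
  refine Finset.inf'_congr (upSet_nonempty hpP hb) rfl ?_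
  intro q hq
  have hq' := Finset.mem_filter.1 hq
  exact (eE_eq_eF n O g m (mem_Pfin.1 hq'.1)).symm

end Stmt14Aux

section Stmt14Ctx

/-- All facts about the integral point `g` needed to control the entry-time function. -/
structure Ctx (n : ℕ) (O : Finset (ℤ × ℤ)) (g : ℤ × ℤ → ℤ) (m : ℤ) : Prop where
  hn : 1 ≤ n
  hA : Aset n ⊆ O
  hB : ∀ p ∈ O, p.2 ≠ -p.1
  nonneg : ∀ p, inP n p → 0 ≤ g p
  g11 : g (1, 1) = m
  chainO : ∀ (pq rs : ℤ × ℤ) (c : List (ℤ × ℤ)), pq ∈ O → inP n rs →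
    (∀ q ∈ c, inP n q ∧ q ∉ O) → List.Chain' (plt n) (pq :: (c ++ [rs])) →
    rs.2 ≠ -rs.1 → (c.map g).sum ≤ g pq - g rs
  chainB : ∀ (pq rs : ℤ × ℤ) (c : List (ℤ × ℤ)), pq ∈ O → inP n rs →
    (∀ q ∈ c, inP n q ∧ q ∉ O) → List.Chain' (plt n) (pq :: (c ++ [rs])) →
    rs.2 = -rs.1 → 2 * (c.map g).sum ≤ 2 * g pq - g rs

variable {n : ℕ} {O : Finset (ℤ × ℤ)} {g : ℤ × ℤ → ℤ} {m : ℤ}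

lemma chainIneq_base (hc : Ctx n O g m) {r : ℤ × ℤ} (hrP : inP n r)
    {p : ℤ × ℤ} (hp : p ∈ O) {c : List (ℤ × ℤ)} (hcP : ∀ q ∈ c, inP n q ∧ q ∉ O)
    (hch : List.Chain' (plt n) (p :: (c ++ [r]))) (hOB : r ∈ O ∨ r.2 = -r.1) :
    (c.map g).sum + eE n O g m p ≤ eE n O g m r := by
  rcases hOB with hro | hrb
  · have h1 := hc.chainO p r c hp hrP hcP hch (hc.hB r hro)
    rw [eE_eq_O hp, eE_eq_O hro]
    omega
  · have hrO : r ∉ O := fun hro => hc.hB r hro hrb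
    have h1 := hc.chainB p r c hp hrP hcP hch hrb
    rw [eE_eq_O hp, eE_eq_B hrO hrb]
    omega

lemma chainIneqE (hc : Ctx n O g m) :
    ∀ (k : ℕ) (r : ℤ × ℤ), inP n r → 3 * n ≤ rankP n r + k →
      ∀ p ∈ O, ∀ (c : List (ℤ × ℤ)), (∀ q ∈ c, inP n q ∧ q ∉ O) →
      List.Chain' (plt n) (p :: (c ++ [r])) →
      (c.map g).sum + eE n O g m p ≤ eE n O g m r := by
  intro k
  induction k with
  | zero =>
    intro r hr hrk p hp c hcP hch
    by_cases hro : r ∈ O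
    · exact chainIneq_base hc hr hp hcP hch (Or.inl hro)
    by_cases hrb : r.2 = -r.1
    · exact chainIneq_base hc hr hp hcP hch (Or.inr hrb)
    · exfalso
      have h0 := upSet_mem_B hr hrb
      have h0' := Finset.mem_filter.1 h0
      have h1 := rankP_lt hr (mem_Pfin.1 h0'.1) h0'.2
      have h2 := rankP_bounds (mem_Pfin.1 h0'.1)
      omega
  | succ k ih =>
    intro r hr hrk p hp c hcP hch
    by_cases hro : r ∈ O
    · exact chainIneq_base hc hr hp hcP hch (Or.inl hro)
    by_cases hrb : r.2 = -r.1
    · exact chainIneq_base hc hr hp hcP hch (Or.inr hrb)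
    · rw [eE_eq_rest n O g m hr hro hrb]
      rw [le_sub_iff_add_le]
      refine Finset.le_inf' _ _ ?_
      intro t ht
      have ht' := Finset.mem_filter.1 ht
      have htP := mem_Pfin.1 ht'.1
      have hrank := rankP_lt hr htP ht'.2
      have h3 : (((c ++ [r]).map g).sum) = (c.map g).sum + g r := by
        simp
      have hch' : List.Chain' (plt n) (p :: ((c ++ [r]) ++ [t])) := by
        have e1 : p :: ((c ++ [r]) ++ [t]) = (p :: (c ++ [r])) ++ [t] := by simp
        rw [e1, List.Chain', List.isChain_append]
        refine ⟨hch, List.isChain_singleton _, ?_⟩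
        intro a ha b hb
        have e2 : (p :: (c ++ [r])) = (p :: c) ++ [r] := by simp
        rw [e2, List.getLast?_concat] at ha
        simp only [List.head?_cons, Option.mem_some_iff] at ha hb
        subst ha; subst hb
        exact ht'.2
      have := ih t htP (by omega) p hp (c ++ [r])
        (by
          intro q hq
          rcases List.mem_append.1 hq with h | h
          · exact hcP q h
          · rcases List.mem_singleton.1 h with rfl
            exact ⟨hr, hro⟩)
        hch'
      rw [h3] at this
      omega

end Stmt14Ctx

section Stmt14Mono

variable {n : ℕ} {O : Finset (ℤ × ℤ)} {g : ℤ × ℤ → ℤ} {m : ℤ}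

lemma plt_of_ne (hle : ple n p q) (hne : p ≠ q) : plt n p q := ⟨hle, hne⟩

lemma chain_pair {p q : ℤ × ℤ} (h : plt n p q) : List.Chain' (plt n) (p :: ([] ++ [q])) := by
  unfold List.Chain'
  simpa using List.isChain_pair.2 h

lemma chain_triple {p q r : ℤ × ℤ} (h1 : plt n p q) (h2 : plt n q r) :
    List.Chain' (plt n) (p :: ([q] ++ [r])) := by
  have : p :: ([q] ++ [r]) = p :: q :: [r] := rfl
  rw [this, List.Chain', List.isChain_cons_cons]
  exact ⟨h1, List.isChain_pair.2 h2⟩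

lemma eE_mono (hc : Ctx n O g m) {p q : ℤ × ℤ} (hp : inP n p) (hq : inP n q)
    (hle : ple n p q) : eE n O g m p ≤ eE n O g m q := by
  by_cases hpq : p = q
  · subst hpq; exact le_refl _
  have hplt : plt n p q := ⟨hle, hpq⟩
  by_cases hpo : p ∈ O
  · have := chainIneqE hc (3 * n) q hq (by have := rankP_bounds hq; omega) p hpo []
      (by simp) (chain_pair hplt)
    simpa using this
  by_cases hpb : p.2 = -p.1
  · exact absurd (B_max hp hpb hq hle) (fun h => hpq h.symm)
  · rw [eE_eq_rest n O g m hp hpo hpb]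
    have h1 : (upSet n p).inf' (upSet_nonempty hp hpb) (eE n O g m) ≤ eE n O g m q :=
      Finset.inf'_le _ (Finset.mem_filter.2 ⟨mem_Pfin.2 hq, hplt⟩)
    have h2 := hc.nonneg p hp
    omega

lemma eE_11 (hc : Ctx n O g m) : eE n O g m (1, 1) = 1 := by
  rw [eE_eq_O (mem_O_11 hc.hn hc.hA), hc.g11]; ring

lemma plt_11 {p : ℤ × ℤ} (hp : inP n p) (hne : p ≠ (1, 1)) : plt n (1, 1) p :=
  ⟨least_11 hp, fun h => hne h.symm⟩

lemma eE_ge_one (hc : Ctx n O g m) {p : ℤ × ℤ} (hp : inP n p) : 1 ≤ eE n O g m p := by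
  by_cases hpo : p ∈ O
  · by_cases hp1 : p = (1, 1)
    · subst hp1; rw [eE_11 hc]
    · rw [eE_eq_O hpo]
      have h1 := hc.chainO (1, 1) p [] (mem_O_11 hc.hn hc.hA) hp (by simp)
        (chain_pair (plt_11 hp hp1)) (hc.hB p hpo)
      have h2 := hc.g11
      simp only [List.map_nil, List.sum_nil] at h1
      omega
  by_cases hpb : p.2 = -p.1
  · have hne : p ≠ (1, 1) := by
      intro h; rw [h] at hpb; norm_num at hpb
    have h1 := hc.chainB (1, 1) p [] (mem_O_11 hc.hn hc.hA) hp (by simp)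
      (chain_pair (plt_11 hp hne)) hpb
    have h2 := hc.g11
    rw [eE_eq_B hpo hpb]
    simp only [List.map_nil, List.sum_nil, mul_zero] at h1
    omega
  · rw [eE_eq_rest n O g m hp hpo hpb]
    have hne : p ≠ (1, 1) := by
      intro h; rw [h] at hpo; exact hpo (mem_O_11 hc.hn hc.hA)
    have hgood : ∀ t ∈ upSet n p, g p + 1 ≤ eE n O g m t := by
      intro t ht
      have ht' := Finset.mem_filter.1 ht
      have htP := mem_Pfin.1 ht'.1
      have h1 := chainIneqE hc (3 * n) t htP (by have := rankP_bounds htP; omega) (1, 1)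
        (mem_O_11 hc.hn hc.hA) [p]
        (by intro q hq; rcases List.mem_singleton.1 hq with rfl; exact ⟨hp, hpo⟩)
        (chain_triple (plt_11 hp hne) ht'.2)
      rw [eE_11 hc] at h1
      simpa using h1
    have := Finset.le_inf' (upSet_nonempty hp hpb) _ hgood
    omega

lemma inf'_upSet_le (hc : Ctx n O g m) {p : ℤ × ℤ} (hp : inP n p) (hpb : p.2 ≠ -p.1) :
    (upSet n p).inf' (upSet_nonempty hp hpb) (eE n O g m) ≤ m + 1 := by
  have hmem := upSet_mem_B hp hpb
  have h1 : (upSet n p).inf' (upSet_nonempty hp hpb) (eE n O g m) ≤ eE n O g m (p.1, -p.1) :=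
    Finset.inf'_le _ hmem
  have hmem' := Finset.mem_filter.1 hmem
  have htP := mem_Pfin.1 hmem'.1
  have htO : (p.1, -p.1) ∉ O := fun h => hc.hB _ h rfl
  have h2 := hc.nonneg _ htP
  rw [eE_eq_B htO rfl] at h1
  omega

lemma eE_le_m1 (hc : Ctx n O g m) {p : ℤ × ℤ} (hp : inP n p) : eE n O g m p ≤ m + 1 := by
  by_cases hpo : p ∈ O
  · rw [eE_eq_O hpo]; have := hc.nonneg p hp; omega
  by_cases hpb : p.2 = -p.1
  · rw [eE_eq_B hpo hpb]; have := hc.nonneg p hp; omega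
  · rw [eE_eq_rest n O g m hp hpo hpb]
    have h1 := inf'_upSet_le hc hp hpb
    have h2 := hc.nonneg p hp
    omega

end Stmt14Mono

section Stmt14Ideals

variable {n : ℕ} {O : Finset (ℤ × ℤ)} {g : ℤ × ℤ → ℤ} {m : ℤ}

/-- The ideal of elements with entry time at most `s`. -/
def Jid (n : ℕ) (O : Finset (ℤ × ℤ)) (g : ℤ × ℤ → ℤ) (m : ℤ) (s : ℤ) : Finset (ℤ × ℤ) :=
  (Pfin n).filter (fun p => eE n O g m p ≤ s)

lemma mem_Jid {s : ℤ} {p : ℤ × ℤ} : p ∈ Jid n O g m s ↔ inP n p ∧ eE n O g m p ≤ s := by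
  rw [Jid, Finset.mem_filter, mem_Pfin]

lemma Jid_ideal (hc : Ctx n O g m) (s : ℤ) : IsIdeal n (Jid n O g m s) := by
  constructor
  · intro p hp; exact (mem_Jid.1 hp).1
  · intro p hp q hq hle
    have h1 := mem_Jid.1 hp
    exact mem_Jid.2 ⟨mem_Pfin.1 hq, le_trans (eE_mono hc (mem_Pfin.1 hq) h1.1 hle) h1.2⟩

lemma Jid_mono {s s' : ℤ} (h : s ≤ s') : Jid n O g m s ⊆ Jid n O g m s' := by
  intro p hp
  have h1 := mem_Jid.1 hp
  exact mem_Jid.2 ⟨h1.1, le_trans h1.2 h⟩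

lemma MO_subset {J : Finset (ℤ × ℤ)} : MO n O J ⊆ J := by
  intro p hp
  rcases Finset.mem_union.1 hp with h | h
  · exact (Finset.mem_inter.1 h).1
  · exact (Finset.mem_filter.1 h).1

lemma mem_MO_of_O {J : Finset (ℤ × ℤ)} {p : ℤ × ℤ} (hpo : p ∈ O) : p ∈ MO n O J ↔ p ∈ J := by
  constructor
  · exact fun h => MO_subset h
  · intro h; exact Finset.mem_union_left _ (Finset.mem_inter.2 ⟨h, hpo⟩)

lemma mem_maxPrec {J : Finset (ℤ × ℤ)} (hJP : ∀ p ∈ J, inP n p) {p : ℤ × ℤ} :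
    p ∈ maxPrec n J ↔ p ∈ J ∧ ∀ q, inP n q → plt n p q → q ∉ J := by
  rw [maxPrec, Finset.mem_filter]
  constructor
  · rintro ⟨h1, h2⟩
    refine ⟨h1, ?_⟩
    intro q hq hplt hqJ
    exact hplt.2 (h2 q hqJ hplt.1).symm
  · rintro ⟨h1, h2⟩
    refine ⟨h1, ?_⟩
    intro q hqJ hle
    by_contra hne
    exact h2 q (hJP q hqJ) ⟨hle, fun h => hne h.symm⟩ hqJ

lemma mem_MO_of_B (hc : Ctx n O g m) {J : Finset (ℤ × ℤ)} (hJP : ∀ p ∈ J, inP n p)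
    {p : ℤ × ℤ} (hp : inP n p) (hpb : p.2 = -p.1) : p ∈ MO n O J ↔ p ∈ J := by
  have hpo : p ∉ O := fun h => hc.hB p h hpb
  constructor
  · exact fun h => MO_subset h
  · intro h
    refine Finset.mem_union_right _ ((mem_maxPrec hJP).2 ⟨h, ?_⟩)
    intro q hq hplt
    exact fun _ => hplt.2 (B_max hp hpb hq hplt.1).symm

lemma mem_MO_Jid_O (hc : Ctx n O g m) {s : ℤ} {p : ℤ × ℤ} (hp : inP n p) (hpo : p ∈ O) :
    p ∈ MO n O (Jid n O g m s) ↔ eE n O g m p ≤ s := by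
  rw [mem_MO_of_O hpo, mem_Jid]
  exact ⟨fun h => h.2, fun h => ⟨hp, h⟩⟩

lemma mem_MO_Jid_B (hc : Ctx n O g m) {s : ℤ} {p : ℤ × ℤ} (hp : inP n p) (hpb : p.2 = -p.1) :
    p ∈ MO n O (Jid n O g m s) ↔ eE n O g m p ≤ s := by
  rw [mem_MO_of_B hc (Jid_ideal hc s).1 hp hpb, mem_Jid]
  exact ⟨fun h => h.2, fun h => ⟨hp, h⟩⟩

lemma mem_MO_Jid_rest (hc : Ctx n O g m) {s : ℤ} {p : ℤ × ℤ} (hp : inP n p) (hpo : p ∉ O)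
    (hpb : p.2 ≠ -p.1) :
    p ∈ MO n O (Jid n O g m s) ↔ eE n O g m p ≤ s ∧
      s < (upSet n p).inf' (upSet_nonempty hp hpb) (eE n O g m) := by
  have h1 : p ∈ MO n O (Jid n O g m s) ↔ p ∈ maxPrec n (Jid n O g m s) := by
    constructor
    · intro h
      rcases Finset.mem_union.1 h with h | h
      · exact absurd (Finset.mem_inter.1 h).2 hpo
      · exact h
    · exact fun h => Finset.mem_union_right _ h
  rw [h1, mem_maxPrec (Jid_ideal hc s).1, mem_Jid, Finset.lt_inf'_iff]
  constructor
  · rintro ⟨⟨_, h2⟩, h3⟩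
    refine ⟨h2, ?_⟩
    intro q hq
    have hq' := Finset.mem_filter.1 hq
    have := h3 q (mem_Pfin.1 hq'.1) hq'.2
    rw [mem_Jid] at this
    push_neg at this
    exact this (mem_Pfin.1 hq'.1)
  · rintro ⟨h2, h3⟩
    refine ⟨⟨hp, h2⟩, ?_⟩
    intro q hq hplt hqJ
    have := h3 q (Finset.mem_filter.2 ⟨mem_Pfin.2 hq, hplt⟩)
    have h4 := (mem_Jid.1 hqJ).2
    omega

end Stmt14Ideals

/-! counting helpers -/

section Stmt14Count

lemma card_filter_range_between (m' : ℕ) (A B : ℤ) (h1 : 1 ≤ A) (h2 : A ≤ B)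
    (h3 : B ≤ m' + 1) :
    (((Finset.range m').filter (fun i : ℕ => A ≤ (i : ℤ) + 1 ∧ (i : ℤ) + 1 < B)).card : ℤ)
      = B - A := by
  have he : (Finset.range m').filter (fun i : ℕ => A ≤ (i : ℤ) + 1 ∧ (i : ℤ) + 1 < B)
      = Finset.Ico (A - 1).toNat (B - 1).toNat := by
    ext i
    simp only [Finset.mem_filter, Finset.mem_range, Finset.mem_Ico]
    omega
  rw [he, Nat.card_Ico]
  omega

lemma card_filter_range_ge (m' : ℕ) (A : ℤ) (h1 : 1 ≤ A) (h3 : A ≤ m' + 1) :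
    (((Finset.range m').filter (fun i : ℕ => A ≤ (i : ℤ) + 1)).card : ℤ) = m' + 1 - A := by
  have he : (Finset.range m').filter (fun i : ℕ => A ≤ (i : ℤ) + 1)
      = Finset.Ico (A - 1).toNat m' := by
    ext i
    simp only [Finset.mem_filter, Finset.mem_range, Finset.mem_Ico]
    omega
  rw [he, Nat.card_Ico]
  omega

lemma list_sum_apply {α β γ : Type*} [AddCommMonoid γ] (p : β) (l : List α)
    (f : α → β → γ) : (l.map f).sum p = (l.map (fun J => f J p)).sum := by
  induction l with
  | nil => rfl
  | cons a l ih =>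
    simp only [List.map_cons, List.sum_cons]
    rw [Pi.add_apply, ih]

lemma list_map_sum_range {α M : Type*} [AddCommMonoid M] (l : List α) (d : α) (f : α → M) :
    (l.map f).sum = ∑ i ∈ Finset.range l.length, f (l.getD i d) := by
  induction l with
  | nil => simp
  | cons a l ih =>
    simp only [List.map_cons, List.sum_cons, List.length_cons]
    rw [Finset.sum_range_succ', ih]
    simp [List.getD, add_comm]

lemma upward_filter_iff (m' : ℕ) (Q : ℕ → Prop) [DecidablePred Q]
    (hup : ∀ i j, i ≤ j → j < m' → Q i → Q j) {i : ℕ} (hi : i < m') :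
    Q i ↔ m' - ((Finset.range m').filter (fun j => Q j)).card ≤ i := by
  set S := (Finset.range m').filter (fun j => Q j) with hS
  by_cases hne : S.Nonempty
  · set k := S.min' hne with hk
    have hkS : k ∈ S := S.min'_mem hne
    have hkQ : Q k ∧ k < m' := by
      have := Finset.mem_filter.1 hkS
      exact ⟨this.2, Finset.mem_range.1 this.1⟩
    have hSeq : S = Finset.Ico k m' := by
      ext j
      simp only [hS, Finset.mem_filter, Finset.mem_range, Finset.mem_Ico]
      constructor
      · rintro ⟨hj1, hj2⟩
        exact ⟨S.min'_le j (Finset.mem_filter.2 ⟨Finset.mem_range.2 hj1, hj2⟩), hj1⟩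
      · rintro ⟨hj1, hj2⟩
        exact ⟨hj2, hup k j hj1 hj2 hkQ.1⟩
    have hcard : S.card = m' - k := by rw [hSeq, Nat.card_Ico]
    rw [hcard]
    constructor
    · intro hQ
      have : i ∈ S := Finset.mem_filter.2 ⟨Finset.mem_range.2 hi, hQ⟩
      have := S.min'_le i this
      omega
    · intro h
      exact hup k i (by omega) hi hkQ.1
  · rw [Finset.not_nonempty_iff_eq_empty] at hne
    rw [hne]
    simp only [Finset.card_empty, Nat.sub_zero]
    constructor
    · intro hQ
      exfalso
      have : i ∈ S := Finset.mem_filter.2 ⟨Finset.mem_range.2 hi, hQ⟩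
      rw [hne] at this
      exact absurd this (Finset.notMem_empty i)
    · omega

end Stmt14Count

section Stmt14Exist

variable {n : ℕ} {O : Finset (ℤ × ℤ)} {g : ℤ × ℤ → ℤ}

/-- The parity set `D` read off from `g`. -/
def DsetG (n : ℕ) (g : ℤ × ℤ → ℤ) : Finset ℤ :=
  (Finset.Icc (1 : ℤ) (n : ℤ)).filter (fun i => ¬ (2 : ℤ) ∣ g (i, -i))

lemma sum_indicator {s : Finset ℕ} (c : ℕ → Prop) [DecidablePred c] (v : ℝ) :
    (∑ i ∈ s, if c i then v else 0) = ((s.filter c).card : ℝ) * v := by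
  rw [Finset.sum_ite, Finset.sum_const_zero, add_zero, Finset.sum_const, nsmul_eq_mul]

lemma list_range_map_sum {M : Type*} [AddCommMonoid M] (m : ℕ) (f : ℕ → M) :
    ((List.range m).map f).sum = ∑ i ∈ Finset.range m, f i := by
  induction m with
  | zero => simp
  | succ m ih =>
    rw [List.range_succ, List.map_append, List.sum_append, Finset.sum_range_succ, ih]
    simp

lemma inP_of_B {i : ℤ} (h1 : 1 ≤ i) (h2 : i ≤ (n : ℤ)) : inP n (i, -i) := by
  refine ⟨h1, h2, ?_, ?_⟩ <;> · show (_ : ℤ) ≤ _; rw [abs_of_nonpos (by omega : -i ≤ 0)]; omega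

lemma exist_sum_eq {m : ℕ} (hc : Ctx n O g (m : ℤ)) (x : (ℤ × ℤ) → ℝ)
    (hgx : ∀ p, x p = (g p : ℝ)) (hzero : ∀ p, ¬ inP n p → g p = 0) :
    x = ((List.range m).map (fun i : ℕ => xJD n O (Jid n O g (m : ℤ) ((i : ℤ) + 1)) ∅)).sum
        - yD (DsetG n g) := by
  funext p
  rw [Pi.sub_apply, hgx, list_sum_apply, list_range_map_sum]
  by_cases hP : inP n p
  · by_cases hpo : p ∈ O
    · have hvb : p.2 ≠ -p.1 := hc.hB p hpo
      have hterm : ∀ i : ℕ, xJD n O (Jid n O g (m : ℤ) ((i : ℤ) + 1)) ∅ p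
          = if eE n O g (m : ℤ) p ≤ (i : ℤ) + 1 then (1 : ℝ) else 0 := by
        intro i
        unfold xJD
        by_cases h : p ∈ MO n O (Jid n O g (m : ℤ) ((i : ℤ) + 1))
        · rw [if_pos h, if_neg (by simp [hvb]), if_pos ((mem_MO_Jid_O hc hP hpo).1 h)]
        · rw [if_neg h, if_neg (fun hh => h ((mem_MO_Jid_O hc hP hpo).2 hh))]
      rw [Finset.sum_congr rfl (fun i _ => hterm i), sum_indicator]
      have hcard := card_filter_range_ge m (eE n O g (m : ℤ) p) (eE_ge_one hc hP)
        (eE_le_m1 hc hP)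
      have hyD : yD (DsetG n g) p = 0 := by
        unfold yD
        rw [if_neg (by rintro ⟨hb, _⟩; exact hvb hb)]
      rw [hyD, sub_zero]
      have heE := eE_eq_O (n := n) (g := g) (m := (m : ℤ)) hpo
      have : (((Finset.range m).filter
          (fun i : ℕ => eE n O g (m : ℤ) p ≤ (i : ℤ) + 1)).card : ℤ) = g p := by omega
      rw [mul_one]
      exact_mod_cast congrArg (fun z : ℤ => (z : ℝ)) this.symm
    by_cases hpb : p.2 = -p.1
    · have hterm : ∀ i : ℕ, xJD n O (Jid n O g (m : ℤ) ((i : ℤ) + 1)) ∅ p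
          = if eE n O g (m : ℤ) p ≤ (i : ℤ) + 1 then (2 : ℝ) else 0 := by
        intro i
        unfold xJD
        by_cases h : p ∈ MO n O (Jid n O g (m : ℤ) ((i : ℤ) + 1))
        · rw [if_pos h, if_pos (by simp [hpb]), if_pos ((mem_MO_Jid_B hc hP hpb).1 h)]
        · rw [if_neg h, if_neg (fun hh => h ((mem_MO_Jid_B hc hP hpb).2 hh))]
      rw [Finset.sum_congr rfl (fun i _ => hterm i), sum_indicator]
      have hcard := card_filter_range_ge m (eE n O g (m : ℤ) p) (eE_ge_one hc hP)
        (eE_le_m1 hc hP)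
      have heE := eE_eq_B (n := n) (g := g) (m := (m : ℤ)) hpo hpb
      have hpp : ((p.1, -p.1) : ℤ × ℤ) = p := Prod.ext rfl hpb.symm
      have hyD : yD (DsetG n g) p = if ¬ (2 : ℤ) ∣ g p then (1 : ℝ) else 0 := by
        unfold yD
        by_cases hd : (2 : ℤ) ∣ g p
        · rw [if_neg, if_neg (by simpa using hd)]
          rintro ⟨_, hmem⟩
          rw [DsetG, Finset.mem_filter, hpp] at hmem
          exact hmem.2 hd
        · rw [if_pos, if_pos hd]
          refine ⟨hpb, ?_⟩
          rw [DsetG, Finset.mem_filter, hpp]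
          exact ⟨Finset.mem_Icc.2 ⟨hP.1, hP.2.1⟩, hd⟩
      rw [hyD]
      by_cases hd : (2 : ℤ) ∣ g p
      · rw [if_neg (not_not_intro hd), sub_zero]
        have h2 : (((Finset.range m).filter
            (fun i : ℕ => eE n O g (m : ℤ) p ≤ (i : ℤ) + 1)).card : ℤ) * 2 = g p := by omega
        exact_mod_cast h2.symm
      · rw [if_pos hd]
        have h2 : (((Finset.range m).filter
            (fun i : ℕ => eE n O g (m : ℤ) p ≤ (i : ℤ) + 1)).card : ℤ) * 2 - 1 = g p := by
          omega
        exact_mod_cast h2.symm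
    · have hterm : ∀ i : ℕ, xJD n O (Jid n O g (m : ℤ) ((i : ℤ) + 1)) ∅ p
          = if (eE n O g (m : ℤ) p ≤ (i : ℤ) + 1 ∧
              (i : ℤ) + 1 < (upSet n p).inf' (upSet_nonempty hP hpb) (eE n O g (m : ℤ)))
            then (1 : ℝ) else 0 := by
        intro i
        unfold xJD
        by_cases h : p ∈ MO n O (Jid n O g (m : ℤ) ((i : ℤ) + 1))
        · rw [if_pos h, if_neg (by rintro ⟨hb, _⟩; exact hpb hb),
            if_pos ((mem_MO_Jid_rest hc hP hpo hpb).1 h)]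
        · rw [if_neg h, if_neg (fun hh => h ((mem_MO_Jid_rest hc hP hpo hpb).2 hh))]
      rw [Finset.sum_congr rfl (fun i _ => hterm i), sum_indicator]
      have heE := eE_eq_rest n O g (m : ℤ) hP hpo hpb
      have hg0 := hc.nonneg p hP
      have hcard := card_filter_range_between m (eE n O g (m : ℤ) p)
        ((upSet n p).inf' (upSet_nonempty hP hpb) (eE n O g (m : ℤ)))
        (eE_ge_one hc hP) (by omega) (inf'_upSet_le hc hP hpb)
      have hyD : yD (DsetG n g) p = 0 := by
        unfold yD
        rw [if_neg (by rintro ⟨hb, _⟩; exact hpb hb)]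
      rw [hyD, sub_zero, mul_one]
      have : (((Finset.range m).filter
          (fun i : ℕ => eE n O g (m : ℤ) p ≤ (i : ℤ) + 1 ∧ (i : ℤ) + 1
            < (upSet n p).inf' (upSet_nonempty hP hpb) (eE n O g (m : ℤ)))).card : ℤ)
          = g p := by omega
      exact_mod_cast congrArg (fun z : ℤ => (z : ℝ)) this.symm
  · have hval : ∀ i ∈ Finset.range m, xJD n O (Jid n O g (m : ℤ) ((i : ℤ) + 1)) ∅ p
        = (0 : ℝ) := by
      intro i _
      unfold xJD
      rw [if_neg]
      intro hmem
      exact hP (mem_Jid.1 (MO_subset hmem)).1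
    rw [Finset.sum_congr rfl hval, Finset.sum_const_zero, hzero p hP]
    have hyD : yD (DsetG n g) p = 0 := by
      unfold yD
      rw [if_neg]
      rintro ⟨hb, hmem⟩
      rw [DsetG, Finset.mem_filter, Finset.mem_Icc] at hmem
      refine hP ⟨hmem.1.1, hmem.1.2, ?_, ?_⟩ <;> rw [hb] <;>
        rw [abs_of_nonpos (by omega : -p.1 ≤ 0)] <;> omega
    rw [hyD]
    norm_num

end Stmt14Exist

section Stmt14CountA

variable {n : ℕ} {O : Finset (ℤ × ℤ)} {g : ℤ × ℤ → ℤ}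

/-- `λ(k) = a_k + … + a_{n-1} + a_n/2` as a natural number. -/
def LkN (n : ℕ) (a : ℕ → ℕ) (k : ℕ) : ℕ := (∑ t ∈ Finset.Icc k (n - 1), a t) + a n / 2

lemma LkN_anti (a : ℕ → ℕ) {k k' : ℕ} (h : k ≤ k') : LkN n a k' ≤ LkN n a k := by
  unfold LkN
  exact Nat.add_le_add_right (Finset.sum_le_sum_of_subset
    (Finset.Icc_subset_Icc h (le_refl _))) _

lemma LkN_succ (a : ℕ → ℕ) {k : ℕ} (h1 : 1 ≤ k) (h2 : k ≤ n - 1) :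
    LkN n a k = a k + LkN n a (k + 1) := by
  unfold LkN
  have he : Finset.Icc k (n - 1) = insert k (Finset.Icc (k + 1) (n - 1)) := by
    ext t
    simp only [Finset.mem_Icc, Finset.mem_insert]
    omega
  rw [he, Finset.sum_insert (by simp only [Finset.mem_Icc]; omega)]
  omega

lemma LkN_top (a : ℕ → ℕ) (hn : 1 ≤ n) : LkN n a n = a n / 2 := by
  unfold LkN
  rw [Finset.Icc_eq_empty (by omega), Finset.sum_empty]
  omega

lemma lower_filter_iff (n : ℕ) (Q : ℕ → Prop) [DecidablePred Q]
    (hdown : ∀ k k', 1 ≤ k → k ≤ k' → k' ≤ n → Q k' → Q k) {k : ℕ} (hk1 : 1 ≤ k)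
    (hk2 : k ≤ n) : Q k ↔ k ≤ ((Finset.Icc 1 n).filter Q).card := by
  set S := (Finset.Icc 1 n).filter Q with hS
  by_cases hne : S.Nonempty
  · set K := S.max' hne with hK
    have hKS : K ∈ S := S.max'_mem hne
    have hKQ : Q K ∧ 1 ≤ K ∧ K ≤ n := by
      have := Finset.mem_filter.1 hKS
      have h2 := Finset.mem_Icc.1 this.1
      exact ⟨this.2, h2.1, h2.2⟩
    have hSeq : S = Finset.Icc 1 K := by
      ext j
      simp only [hS, Finset.mem_filter, Finset.mem_Icc]
      constructor
      · rintro ⟨⟨hj1, hj2⟩, hj3⟩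
        exact ⟨hj1, S.le_max' j (Finset.mem_filter.2 ⟨Finset.mem_Icc.2 ⟨hj1, hj2⟩, hj3⟩)⟩
      · rintro ⟨hj1, hj2⟩
        exact ⟨⟨hj1, by omega⟩, hdown j K hj1 hj2 hKQ.2.2 hKQ.1⟩
    have hcard : S.card = K := by rw [hSeq, Nat.card_Icc]; omega
    rw [hcard]
    constructor
    · intro hQ
      exact S.le_max' k (Finset.mem_filter.2 ⟨Finset.mem_Icc.2 ⟨hk1, hk2⟩, hQ⟩)
    · intro h
      exact hdown k K hk1 h hKQ.2.2 hKQ.1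
  · rw [Finset.not_nonempty_iff_eq_empty] at hne
    rw [hne]
    simp only [Finset.card_empty]
    constructor
    · intro hQ
      exfalso
      have : k ∈ S := Finset.mem_filter.2 ⟨Finset.mem_Icc.2 ⟨hk1, hk2⟩, hQ⟩
      rw [hne] at this
      exact absurd this (Finset.notMem_empty k)
    · omega

lemma mem_O_diag (hn : 1 ≤ n) (hA : Aset n ⊆ O) {k : ℕ} (hk1 : 1 ≤ k) (hk2 : k ≤ n) :
    ((k : ℤ), (k : ℤ)) ∈ O :=
  hA (mem_Aset.2 ⟨(k : ℤ), by exact_mod_cast hk1, by exact_mod_cast hk2, rfl⟩)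

lemma inP_diag {k : ℕ} (hk1 : 1 ≤ k) (hk2 : k ≤ n) : inP n ((k : ℤ), (k : ℤ)) := by
  refine ⟨?_, ?_, ?_, ?_⟩
  · show (1 : ℤ) ≤ (k : ℤ); exact_mod_cast hk1
  · show ((k : ℤ)) ≤ (n : ℤ); exact_mod_cast hk2
  · show ((k : ℤ)) ≤ |((k : ℤ))|
    rw [abs_of_nonneg (by positivity : (0 : ℤ) ≤ (k : ℤ))]
  · show |((k : ℤ))| ≤ (n : ℤ)
    rw [abs_of_nonneg (by positivity : (0 : ℤ) ≤ (k : ℤ))]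
    exact_mod_cast hk2

lemma card_Jid_inter_A {a : ℕ → ℕ} {m : ℕ} (hc : Ctx n O g (m : ℤ))
    (hdiag : ∀ k : ℕ, 1 ≤ k → k ≤ n → g ((k : ℤ), (k : ℤ)) = (LkN n a k : ℤ)) (s : ℤ) :
    ((Jid n O g (m : ℤ) s) ∩ Aset n).card
      = ((Finset.Icc 1 n).filter (fun k : ℕ => (m : ℤ) + 1 - (LkN n a k : ℤ) ≤ s)).card := by
  have hinj : Function.Injective (fun k : ℕ => (((k : ℤ), (k : ℤ)) : ℤ × ℤ)) := by
    intro u v huv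
    simpa using congrArg Prod.fst huv
  have hset : (Jid n O g (m : ℤ) s) ∩ Aset n
      = ((Finset.Icc 1 n).filter (fun k : ℕ => (m : ℤ) + 1 - (LkN n a k : ℤ) ≤ s)).image
        (fun k : ℕ => (((k : ℤ), (k : ℤ)) : ℤ × ℤ)) := by
    ext p
    simp only [Finset.mem_inter, Finset.mem_image, Finset.mem_filter, Finset.mem_Icc]
    constructor
    · rintro ⟨hJ, hAp⟩
      obtain ⟨k, hk1, hk2, rfl⟩ := mem_Aset.1 hAp
      have hk1n : 1 ≤ k.toNat := by omega
      have hk2n : k.toNat ≤ n := by omega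
      have hco : ((k.toNat : ℤ)) = k := by omega
      refine ⟨k.toNat, ⟨⟨hk1n, hk2n⟩, ?_⟩, ?_⟩
      · have hO : ((k, k) : ℤ × ℤ) ∈ O := hc.hA hAp
        have hle := (mem_Jid.1 hJ).2
        rw [eE_eq_O hO] at hle
        have hd := hdiag k.toNat hk1n hk2n
        rw [hco] at hd
        omega
      · show ((((k.toNat : ℤ)), ((k.toNat : ℤ))) : ℤ × ℤ) = (k, k)
        rw [hco]
    · rintro ⟨k, ⟨⟨hk1, hk2⟩, hcond⟩, rfl⟩
      constructor
      · refine mem_Jid.2 ⟨inP_diag hk1 hk2, ?_⟩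
        rw [eE_eq_O (mem_O_diag hc.hn hc.hA hk1 hk2), hdiag k hk1 hk2]
        omega
      · exact mem_Aset.2 ⟨(k : ℤ), by exact_mod_cast hk1, by exact_mod_cast hk2, rfl⟩
  rw [hset, Finset.card_image_of_injective _ hinj]

end Stmt14CountA

section Stmt14CountB

variable {n : ℕ} {O : Finset (ℤ × ℤ)} {g : ℤ × ℤ → ℤ}

lemma count_key {a : ℕ → ℕ} {m : ℕ} (hc : Ctx n O g (m : ℤ))
    (hdiag : ∀ k : ℕ, 1 ≤ k → k ≤ n → g ((k : ℤ), (k : ℤ)) = (LkN n a k : ℤ))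
    (hm : m = LkN n a 1) {k₀ : ℕ} (hk1 : 1 ≤ k₀) (hk2n : k₀ ≤ n) (i : ℕ) :
    ((Jid n O g (m : ℤ) ((i : ℤ) + 1)) ∩ Aset n).card = k₀
      ↔ ((m : ℤ) + 1 - (LkN n a k₀ : ℤ) ≤ (i : ℤ) + 1 ∧
        ((k₀ = n) ∨ ¬ ((m : ℤ) + 1 - (LkN n a (k₀ + 1) : ℤ) ≤ (i : ℤ) + 1))) := by
  have hdown : ∀ k k', 1 ≤ k → k ≤ k' → k' ≤ n →
      ((m : ℤ) + 1 - (LkN n a k' : ℤ) ≤ (i : ℤ) + 1) →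
      ((m : ℤ) + 1 - (LkN n a k : ℤ) ≤ (i : ℤ) + 1) := by
    intro k k' h1 h2 h3 h4
    have := LkN_anti (n := n) a h2
    omega
  rw [card_Jid_inter_A hc hdiag]
  have hcle : ((Finset.Icc 1 n).filter
      (fun k : ℕ => (m : ℤ) + 1 - (LkN n a k : ℤ) ≤ (i : ℤ) + 1)).card ≤ n := by
    calc ((Finset.Icc 1 n).filter _).card ≤ (Finset.Icc 1 n).card :=
          Finset.card_filter_le _ _
      _ = n := by rw [Nat.card_Icc]; omega
  have hQk := lower_filter_iff n
    (fun k : ℕ => (m : ℤ) + 1 - (LkN n a k : ℤ) ≤ (i : ℤ) + 1) hdown hk1 hk2n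
  by_cases hkn : k₀ = n
  · subst hkn
    constructor
    · intro h
      exact ⟨hQk.2 (by omega), Or.inl rfl⟩
    · rintro ⟨h1, _⟩
      have := hQk.1 h1
      omega
  · have hk2 : k₀ + 1 ≤ n := by omega
    have hQk1 := lower_filter_iff n
      (fun k : ℕ => (m : ℤ) + 1 - (LkN n a k : ℤ) ≤ (i : ℤ) + 1) hdown (by omega) hk2
    simp only [hkn, false_or]
    omega

end Stmt14CountB

section Stmt14CountC

variable {n : ℕ} {O : Finset (ℤ × ℤ)} {g : ℤ × ℤ → ℤ}

lemma count_filter_mid {a : ℕ → ℕ} {m : ℕ} (hc : Ctx n O g (m : ℤ))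
    (hdiag : ∀ k : ℕ, 1 ≤ k → k ≤ n → g ((k : ℤ), (k : ℤ)) = (LkN n a k : ℤ))
    (hm : m = LkN n a 1) {k₀ : ℕ} (hk1 : 1 ≤ k₀) (hk2 : k₀ ≤ n - 1) :
    ((Finset.range m).filter
      (fun i : ℕ => ((Jid n O g (m : ℤ) ((i : ℤ) + 1)) ∩ Aset n).card = k₀)).card = a k₀ := by
  have hn := hc.hn
  have hk2n : k₀ ≤ n := by omega
  have hL1 : LkN n a k₀ ≤ m := hm ▸ LkN_anti a hk1
  have hL2 : LkN n a (k₀ + 1) ≤ LkN n a k₀ := LkN_anti a (by omega)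
  have hLsucc : LkN n a k₀ = a k₀ + LkN n a (k₀ + 1) := LkN_succ a hk1 hk2
  have hset : (Finset.range m).filter
      (fun i : ℕ => ((Jid n O g (m : ℤ) ((i : ℤ) + 1)) ∩ Aset n).card = k₀)
      = Finset.Ico (m - LkN n a k₀) (m - LkN n a (k₀ + 1)) := by
    ext i
    simp only [Finset.mem_filter, Finset.mem_range, Finset.mem_Ico]
    rw [count_key hc hdiag hm hk1 hk2n i]
    have hne : ¬ (k₀ = n) := by omega
    simp only [hne, false_or]
    omega
  rw [hset, Nat.card_Ico]
  omega

lemma count_filter_top {a : ℕ → ℕ} {m : ℕ} (hc : Ctx n O g (m : ℤ))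
    (hdiag : ∀ k : ℕ, 1 ≤ k → k ≤ n → g ((k : ℤ), (k : ℤ)) = (LkN n a k : ℤ))
    (hm : m = LkN n a 1) :
    ((Finset.range m).filter
      (fun i : ℕ => ((Jid n O g (m : ℤ) ((i : ℤ) + 1)) ∩ Aset n).card = n)).card = a n / 2 := by
  have hn := hc.hn
  have hL1 : LkN n a n ≤ m := hm ▸ LkN_anti a hn
  have hLn : LkN n a n = a n / 2 := LkN_top a hn
  have hset : (Finset.range m).filter
      (fun i : ℕ => ((Jid n O g (m : ℤ) ((i : ℤ) + 1)) ∩ Aset n).card = n)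
      = Finset.Ico (m - LkN n a n) m := by
    ext i
    simp only [Finset.mem_filter, Finset.mem_range, Finset.mem_Ico]
    rw [count_key hc hdiag hm hn (le_refl n) i]
    simp only [eq_self_iff_true, true_or, and_true]
    omega
  rw [hset, Nat.card_Ico]
  omega

lemma length_filter_range_map {α : Type*} (m : ℕ) (f : ℕ → α) (q : α → Bool) :
    (((List.range m).map f).filter q).length
      = ((Finset.range m).filter (fun i : ℕ => q (f i) = true)).card := by
  induction m with
  | zero => simp
  | succ m ih =>
    rw [List.range_succ, List.map_append, List.filter_append, List.length_append, ih,
      Finset.range_add_one, Finset.filter_insert]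
    by_cases hq : q (f m) = true
    · rw [if_pos hq, Finset.card_insert_of_notMem (by simp)]
      simp [hq]
    · rw [if_neg hq]
      simp [hq]

lemma chain'_map_range {α : Type*} (m : ℕ) (f : ℕ → α) (R : α → α → Prop)
    (h : ∀ i : ℕ, R (f i) (f (i + 1))) : List.Chain' R ((List.range m).map f) := by
  rw [List.Chain', List.isChain_map, List.isChain_iff_getElem]
  intro i hi
  simp only [List.getElem_range]
  exact h _

end Stmt14CountC

section Stmt14Uniq

variable {n : ℕ} {O : Finset (ℤ × ℤ)} {g : ℤ × ℤ → ℤ}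

lemma uniq_core {m : ℕ} (hc : Ctx n O g (m : ℤ)) (F : ℕ → Finset (ℤ × ℤ))
    (hFid : ∀ i, i < m → IsIdeal n (F i))
    (hFmono : ∀ i j, i ≤ j → j < m → F i ⊆ F j)
    (D' : Finset ℤ) (hD' : D' ⊆ Finset.Icc (1 : ℤ) (n : ℤ))
    (heq : ∀ p, inP n p → (g p : ℝ)
      = (∑ i ∈ Finset.range m, xJD n O (F i) ∅ p) - yD D' p) :
    (∀ p, inP n p → ∀ i, i < m →
      (p ∈ F i ↔ eE n O g (m : ℤ) p ≤ (i : ℤ) + 1)) ∧ D' = DsetG n g := by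
  -- the count function
  have hcle : ∀ p : ℤ × ℤ, ((Finset.range m).filter (fun j : ℕ => p ∈ F j)).card ≤ m := by
    intro p
    calc ((Finset.range m).filter (fun j : ℕ => p ∈ F j)).card
        ≤ (Finset.range m).card := Finset.card_filter_le _ _
      _ = m := Finset.card_range m
  have hchar : ∀ p : ℤ × ℤ, ∀ i, i < m → (p ∈ F i ↔
      m - ((Finset.range m).filter (fun j : ℕ => p ∈ F j)).card ≤ i) := by
    intro p i hi
    exact upward_filter_iff m (fun j => p ∈ F j)
      (fun i j hij hj hQ => hFmono i j hij hj hQ) hi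
  have hFP : ∀ i, i < m → ∀ p ∈ F i, inP n p := fun i hi => (hFid i hi).1
  -- base equation on O
  have hgO : ∀ p, inP n p → p ∈ O →
      (g p : ℤ) = ((Finset.range m).filter (fun j : ℕ => p ∈ F j)).card := by
    intro p hP hpo
    have hvb : p.2 ≠ -p.1 := hc.hB p hpo
    have hterm : ∀ i ∈ Finset.range m, xJD n O (F i) ∅ p
        = if p ∈ F i then (1 : ℝ) else 0 := by
      intro i hi
      unfold xJD
      by_cases h : p ∈ MO n O (F i)
      · rw [if_pos h, if_neg (by simp [hvb]), if_pos ((mem_MO_of_O hpo).1 h)]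
      · rw [if_neg h, if_neg (fun hh => h ((mem_MO_of_O hpo).2 hh))]
    have hyD : yD D' p = 0 := by
      unfold yD; rw [if_neg (by rintro ⟨hb, _⟩; exact hvb hb)]
    have := heq p hP
    rw [Finset.sum_congr rfl hterm, sum_indicator, hyD, sub_zero, mul_one] at this
    exact_mod_cast this
  -- base equation on B
  have hgB : ∀ p, inP n p → p ∉ O → p.2 = -p.1 →
      g p = 2 * (((Finset.range m).filter (fun j : ℕ => p ∈ F j)).card : ℤ)
        - (if p.1 ∈ D' then 1 else 0) := by
    intro p hP hpo hpb
    have hterm : ∀ i ∈ Finset.range m, xJD n O (F i) ∅ p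
        = if p ∈ F i then (2 : ℝ) else 0 := by
      intro i hi
      unfold xJD
      by_cases h : p ∈ MO n O (F i)
      · rw [if_pos h, if_pos (by simp [hpb]),
          if_pos ((mem_MO_of_B hc (hFP i (Finset.mem_range.1 hi)) hP hpb).1 h)]
      · rw [if_neg h,
          if_neg (fun hh => h ((mem_MO_of_B hc (hFP i (Finset.mem_range.1 hi)) hP hpb).2 hh))]
    have hyD : yD D' p = if p.1 ∈ D' then (1 : ℝ) else 0 := by
      unfold yD
      by_cases hd : p.1 ∈ D'
      · rw [if_pos ⟨hpb, hd⟩, if_pos hd]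
      · rw [if_neg (by rintro ⟨_, hdd⟩; exact hd hdd), if_neg hd]
    have := heq p hP
    rw [Finset.sum_congr rfl hterm, sum_indicator, hyD] at this
    by_cases hd : p.1 ∈ D'
    · rw [if_pos hd] at this
      rw [if_pos hd]
      have h2 : (g p : ℝ) = 2 * (((Finset.range m).filter
          (fun j : ℕ => p ∈ F j)).card : ℝ) - 1 := by rw [this]; ring
      exact_mod_cast h2
    · rw [if_neg hd] at this
      rw [if_neg hd]
      have h2 : (g p : ℝ) = 2 * (((Finset.range m).filter
          (fun j : ℕ => p ∈ F j)).card : ℝ) - 0 := by rw [this]; ring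
      exact_mod_cast h2
  -- base equation on the rest
  have hgR : ∀ p (hP : inP n p) (hpo : p ∉ O) (hpb : p.2 ≠ -p.1),
      (g p : ℤ) = (((Finset.range m).filter (fun j : ℕ => p ∈ F j)).card : ℤ)
        - ((upSet n p).sup' (upSet_nonempty hP hpb)
            (fun q => (((Finset.range m).filter (fun j : ℕ => q ∈ F j)).card : ℤ))) := by
    intro p hP hpo hpb
    have hne := upSet_nonempty hP hpb
    set KN := (upSet n p).sup' hne
      (fun q => ((Finset.range m).filter (fun j : ℕ => q ∈ F j)).card) with hKN
    have hKcast : ((KN : ℕ) : ℤ) = (upSet n p).sup' hne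
        (fun q => (((Finset.range m).filter (fun j : ℕ => q ∈ F j)).card : ℤ)) := by
      rw [hKN]
      exact Finset.comp_sup'_eq_sup'_comp hne (fun t : ℕ => (t : ℤ))
        (fun x y => Nat.cast_max x y)
    have hKle : ∀ q ∈ upSet n p,
        ((Finset.range m).filter (fun j : ℕ => q ∈ F j)).card
          ≤ ((Finset.range m).filter (fun j : ℕ => p ∈ F j)).card := by
      intro q hq
      apply Finset.card_le_card
      intro i hi
      have hi' := Finset.mem_filter.1 hi
      have him := Finset.mem_range.1 hi'.1
      refine Finset.mem_filter.2 ⟨hi'.1, ?_⟩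
      have hq' := Finset.mem_filter.1 hq
      exact (hFid i him).2 q hi'.2 p (mem_Pfin.2 hP) hq'.2.1
    have hKmax : KN ≤ ((Finset.range m).filter (fun j : ℕ => p ∈ F j)).card :=
      Finset.sup'_le hne _ hKle
    have hterm : ∀ i ∈ Finset.range m, xJD n O (F i) ∅ p
        = if (m - ((Finset.range m).filter (fun j : ℕ => p ∈ F j)).card ≤ i ∧ i < m - KN)
          then (1 : ℝ) else 0 := by
      intro i hi
      have him := Finset.mem_range.1 hi
      unfold xJD
      have hMO : p ∈ MO n O (F i) ↔ (p ∈ F i ∧ ∀ q, inP n q → plt n p q → q ∉ F i) := by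
        constructor
        · intro h
          rcases Finset.mem_union.1 h with h | h
          · exact absurd (Finset.mem_inter.1 h).2 hpo
          · exact (mem_maxPrec (hFP i him)).1 h
        · intro h
          exact Finset.mem_union_right _ ((mem_maxPrec (hFP i him)).2 h)
      have hcond : (p ∈ F i ∧ ∀ q, inP n q → plt n p q → q ∉ F i) ↔
          (m - ((Finset.range m).filter (fun j : ℕ => p ∈ F j)).card ≤ i ∧ i < m - KN) := by
        constructor
        · rintro ⟨h1, h2⟩
          refine ⟨(hchar p i him).1 h1, ?_⟩
          obtain ⟨q0, hq0, hq0v⟩ := Finset.exists_mem_eq_sup' hne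
            (fun q => ((Finset.range m).filter (fun j : ℕ => q ∈ F j)).card)
          have hq0' := Finset.mem_filter.1 hq0
          have hnq0 := h2 q0 (mem_Pfin.1 hq0'.1) hq0'.2
          have hx : ¬ (m - ((Finset.range m).filter (fun j : ℕ => q0 ∈ F j)).card ≤ i) :=
            fun hle => hnq0 ((hchar q0 i him).2 hle)
          have hq0c := hcle q0
          omega
        · rintro ⟨h1, h2⟩
          refine ⟨(hchar p i him).2 h1, ?_⟩
          intro q hq hplt hqF
          have hqU : q ∈ upSet n p := Finset.mem_filter.2 ⟨mem_Pfin.2 hq, hplt⟩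
          have h3 := Finset.le_sup'
            (fun q => ((Finset.range m).filter (fun j : ℕ => q ∈ F j)).card) hqU
          have h4 := (hchar q i him).1 hqF
          have hqc := hcle q
          omega
      by_cases h : p ∈ MO n O (F i)
      · rw [if_pos h, if_neg (by rintro ⟨hb, _⟩; exact hpb hb), if_pos (hcond.1 (hMO.1 h))]
      · rw [if_neg h, if_neg (fun hh => h (hMO.2 (hcond.2 hh)))]
    have hyD : yD D' p = 0 := by
      unfold yD; rw [if_neg (by rintro ⟨hb, _⟩; exact hpb hb)]
    have heqp := heq p hP
    rw [Finset.sum_congr rfl hterm, sum_indicator, hyD, sub_zero, mul_one] at heqp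
    have hband : ((Finset.range m).filter (fun i : ℕ =>
        m - ((Finset.range m).filter (fun j : ℕ => p ∈ F j)).card ≤ i ∧ i < m - KN)).card
        = ((Finset.range m).filter (fun j : ℕ => p ∈ F j)).card - KN := by
      have he : (Finset.range m).filter (fun i : ℕ =>
          m - ((Finset.range m).filter (fun j : ℕ => p ∈ F j)).card ≤ i ∧ i < m - KN)
          = Finset.Ico (m - ((Finset.range m).filter (fun j : ℕ => p ∈ F j)).card)
            (m - KN) := by
        ext i
        simp only [Finset.mem_filter, Finset.mem_range, Finset.mem_Ico]
        omega
      rw [he, Nat.card_Ico]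
      have := hcle p
      omega
    rw [hband] at heqp
    have hZ : (g p : ℤ) = ((((Finset.range m).filter
        (fun j : ℕ => p ∈ F j)).card - KN : ℕ) : ℤ) := by exact_mod_cast heqp
    rw [hZ, ← hKcast]
    have := hcle p
    omega
  have main : ∀ (k : ℕ) (p : ℤ × ℤ), inP n p → 3 * n ≤ rankP n p + k →
      ((((Finset.range m).filter (fun j : ℕ => p ∈ F j)).card : ℤ)
        = (m : ℤ) + 1 - eE n O g (m : ℤ) p) := by
    intro k
    induction k with
    | zero =>
      intro p hP hrk
      by_cases hpo : p ∈ O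
      · rw [eE_eq_O hpo]; have := hgO p hP hpo; omega
      by_cases hpb : p.2 = -p.1
      · rw [eE_eq_B hpo hpb]
        have := hgB p hP hpo hpb
        by_cases hd : p.1 ∈ D'
        · rw [if_pos hd] at this; omega
        · rw [if_neg hd] at this; omega
      · exfalso
        have h0 := upSet_mem_B hP hpb
        have h0' := Finset.mem_filter.1 h0
        have h1 := rankP_lt hP (mem_Pfin.1 h0'.1) h0'.2
        have h2 := rankP_bounds (mem_Pfin.1 h0'.1)
        omega
    | succ k ih =>
      intro p hP hrk
      by_cases hpo : p ∈ O
      · rw [eE_eq_O hpo]; have := hgO p hP hpo; omega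
      by_cases hpb : p.2 = -p.1
      · rw [eE_eq_B hpo hpb]
        have := hgB p hP hpo hpb
        by_cases hd : p.1 ∈ D'
        · rw [if_pos hd] at this; omega
        · rw [if_neg hd] at this; omega
      · rw [eE_eq_rest n O g (m : ℤ) hP hpo hpb]
        have hne := upSet_nonempty hP hpb
        have hsup : (upSet n p).sup' hne
            (fun q => (((Finset.range m).filter (fun j : ℕ => q ∈ F j)).card : ℤ))
            = (m : ℤ) + 1 - (upSet n p).inf' hne (eE n O g (m : ℤ)) := by
          have hcongr : (upSet n p).sup' hne
              (fun q => (((Finset.range m).filter (fun j : ℕ => q ∈ F j)).card : ℤ))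
              = (upSet n p).sup' hne (fun q => (m : ℤ) + 1 - eE n O g (m : ℤ) q) := by
            apply Finset.sup'_congr hne rfl
            intro q hq
            have hq' := Finset.mem_filter.1 hq
            have h1 := rankP_lt hP (mem_Pfin.1 hq'.1) hq'.2
            exact ih q (mem_Pfin.1 hq'.1) (by omega)
          rw [hcongr]
          apply le_antisymm
          · apply Finset.sup'_le
            intro q hq
            have := Finset.inf'_le (eE n O g (m : ℤ)) hq
            omega
          · obtain ⟨q0, hq0, hv⟩ := Finset.exists_mem_eq_inf' hne (eE n O g (m : ℤ))
            rw [hv]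
            exact Finset.le_sup' (fun q => (m : ℤ) + 1 - eE n O g (m : ℤ) q) hq0
        have hR := hgR p hP hpo hpb
        rw [hsup] at hR
        omega
  constructor
  · intro p hP i hi
    have h1 := hchar p i hi
    have h2 := main (3 * n) p hP (by omega)
    have h3 := hcle p
    rw [h1]
    omega
  · ext i
    constructor
    · intro hiD
      have hii := Finset.mem_Icc.1 (hD' hiD)
      have hPi : inP n (i, -i) := inP_of_B hii.1 hii.2
      have hOi : ((i, -i) : ℤ × ℤ) ∉ O := fun h => hc.hB _ h rfl
      have hB2 := hgB (i, -i) hPi hOi rfl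
      have hfst : ((i, -i) : ℤ × ℤ).1 = i := rfl
      rw [hfst, if_pos hiD] at hB2
      rw [DsetG, Finset.mem_filter, Finset.mem_Icc]
      refine ⟨⟨hii.1, hii.2⟩, ?_⟩
      intro hdvd
      obtain ⟨c, hcv⟩ := hdvd
      omega
    · intro hiD
      rw [DsetG, Finset.mem_filter, Finset.mem_Icc] at hiD
      obtain ⟨⟨h1, h2⟩, hodd⟩ := hiD
      have hPi : inP n (i, -i) := inP_of_B h1 h2
      have hOi : ((i, -i) : ℤ × ℤ) ∉ O := fun h => hc.hB _ h rfl
      have hB2 := hgB (i, -i) hPi hOi rfl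
      have hfst : ((i, -i) : ℤ × ℤ).1 = i := rfl
      rw [hfst] at hB2
      by_contra hnd
      rw [if_neg hnd] at hB2
      exact hodd ⟨(((Finset.range m).filter
        (fun j : ℕ => ((i, -i) : ℤ × ℤ) ∈ F j)).card : ℤ), by omega⟩

end Stmt14Uniq

lemma chain'_getD_mono {l : List (Finset (ℤ × ℤ))} (h : List.Chain' (· ⊆ ·) l) :
    ∀ i j : ℕ, i ≤ j → j < l.length → l.getD i ∅ ⊆ l.getD j ∅ := by
  have hadj := List.isChain_iff_getElem.1 h
  intro i j hij hj
  induction j with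
  | zero =>
    have hi0 : i = 0 := by omega
    subst hi0
    exact subset_refl _
  | succ j ih =>
    rcases Nat.lt_or_ge i (j + 1) with hlt | hge
    · have hstep : l.getD j ∅ ⊆ l.getD (j + 1) ∅ := by
        have hj' : j < l.length - 1 := by omega
        have hx := hadj j (by omega)
        rw [List.getD_eq_getElem l ∅ (show j < l.length by omega),
          List.getD_eq_getElem l ∅ (show j + 1 < l.length by omega)]
        exact hx
      exact subset_trans (ih (by omega) (by omega)) hstep
    · have hieq : i = j + 1 := by omega
      subst hieq
      exact subset_refl _

/-- For `λ = (a₁,…,a_n)` integral dominant with `a_n` even, every lattice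
point `x ∈ 𝒬^B_O(λ) ∩ ℤ^P` has a unique decomposition
`x = x^{J₁,∅} + … + x^{J_{m−1},∅} + x^{J_m,D}` with order ideals `J₁ ⊆ … ⊆ J_m`, exactly
`a_k` of them in `𝒥ₖ` for `k ≤ n−1` and `a_n/2` in `𝒥ₙ`, and `D ⊆ [1,n]` with
`(i,−i) ∈ J_m` for `i ∈ D`.  (We encode `x^{J_m,D} = x^{J_m,∅} − 1_{{(i,−i) : i ∈ D}}`.) -/
theorem stmt14 (n : ℕ) (hn : 1 ≤ n) (O : Finset (ℤ × ℤ)) (hA : Aset n ⊆ O)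
    (hO : O ⊆ Pfin n) (hB : ∀ p ∈ O, p.2 ≠ -p.1) (a : ℕ → ℕ) (han : 2 ∣ a n)
    (x : (ℤ × ℤ) → ℝ) (hx : x ∈ QB n O (lamB n a)) (hlat : IsLat x) :
    ∃! z : List (Finset (ℤ × ℤ)) × Finset ℤ,
      (∀ J ∈ z.1, IsIdeal n J) ∧ List.Chain' (· ⊆ ·) z.1 ∧
      (∀ k : ℕ, 1 ≤ k → k ≤ n - 1 →
        (z.1.filter fun J => decide ((J ∩ Aset n).card = k)).length = a k) ∧
      (z.1.filter fun J => decide ((J ∩ Aset n).card = n)).length = a n / 2 ∧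
      z.1.length = (∑ k ∈ Finset.Icc 1 (n - 1), a k) + a n / 2 ∧
      z.2 ⊆ Finset.Icc 1 (n : ℤ) ∧
      (∀ i ∈ z.2, ∃ J ∈ z.1, ((i, -i) : ℤ × ℤ) ∈ J) ∧
      x = (z.1.map fun J => xJD n O J ∅).sum - yD z.2 := by
  classical
  have hlat' : ∀ p, ∃ mm : ℤ, x p = (mm : ℝ) := hlat
  choose g hg using hlat'
  set mN : ℕ := (∑ k ∈ Finset.Icc 1 (n - 1), a k) + a n / 2 with hmN
  obtain ⟨hx1, hx2, hx3, hx4⟩ := hx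
  have hmLk : mN = LkN n a 1 := by rw [hmN]; rfl
  have hzero : ∀ p, ¬ inP n p → g p = 0 := by
    intro p hp
    have h0 := hx3 p hp
    rw [hg] at h0
    exact_mod_cast h0
  have hnonneg : ∀ p, inP n p → 0 ≤ g p := by
    intro p hp
    have h0 := hx2 p hp
    rw [hg] at h0
    exact_mod_cast h0
  have hdiag : ∀ k : ℕ, 1 ≤ k → k ≤ n → g ((k : ℤ), (k : ℤ)) = (LkN n a k : ℤ) := by
    intro k hk1 hk2
    have hx1k := hx1 (k : ℤ) (by exact_mod_cast hk1) (by exact_mod_cast hk2)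
    rw [hg] at hx1k
    obtain ⟨t, ht⟩ := han
    have h2 : a n / 2 = t := by omega
    have hlam : lamB n a (k : ℤ) = ((LkN n a k : ℕ) : ℝ) := by
      unfold lamB LkN
      rw [h2, ht]
      have h3 : ((k : ℤ)).toNat = k := by omega
      rw [h3]
      push_cast
      ring
    rw [hlam] at hx1k
    exact_mod_cast hx1k
  have hg11 : g (1, 1) = (mN : ℤ) := by
    have h0 := hdiag 1 (le_refl 1) hn
    rw [hmLk]
    simpa using h0
  have hcast_sum : ∀ c : List (ℤ × ℤ), (c.map x).sum = (((c.map g).sum : ℤ) : ℝ) := by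
    intro c
    induction c with
    | nil => simp
    | cons q c ih =>
      simp only [List.map_cons, List.sum_cons, ih, hg q]
      push_cast
      ring
  have hchainO : ∀ (pq rs : ℤ × ℤ) (c : List (ℤ × ℤ)), pq ∈ O → inP n rs →
      (∀ q ∈ c, inP n q ∧ q ∉ O) → List.Chain' (plt n) (pq :: (c ++ [rs])) →
      rs.2 ≠ -rs.1 → (c.map g).sum ≤ g pq - g rs := by
    intro pq rs c h1 h2 h3 h4 h5
    have h0 := hx4 pq rs c h1 h2 h3 h4
    rw [if_neg h5, hcast_sum, hg, hg] at h0
    have h6 : (((c.map g).sum : ℤ) : ℝ) ≤ (g pq : ℝ) - (g rs : ℝ) := by linarith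
    exact_mod_cast h6
  have hchainB : ∀ (pq rs : ℤ × ℤ) (c : List (ℤ × ℤ)), pq ∈ O → inP n rs →
      (∀ q ∈ c, inP n q ∧ q ∉ O) → List.Chain' (plt n) (pq :: (c ++ [rs])) →
      rs.2 = -rs.1 → 2 * (c.map g).sum ≤ 2 * g pq - g rs := by
    intro pq rs c h1 h2 h3 h4 h5
    have h0 := hx4 pq rs c h1 h2 h3 h4
    rw [if_pos h5, hcast_sum, hg, hg] at h0
    have h6 : 2 * (((c.map g).sum : ℤ) : ℝ) ≤ 2 * (g pq : ℝ) - (g rs : ℝ) := by linarith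
    exact_mod_cast h6
  have hCtx : Ctx n O g (mN : ℤ) := ⟨hn, hA, hB, hnonneg, hg11, hchainO, hchainB⟩
  refine ⟨((List.range mN).map (fun i : ℕ => Jid n O g (mN : ℤ) ((i : ℤ) + 1)), DsetG n g),
    ⟨?_, ?_, ?_, ?_, ?_, ?_, ?_, ?_⟩, ?_⟩
  · intro J hJ
    simp only [List.mem_map, List.mem_range] at hJ
    obtain ⟨i, _, rfl⟩ := hJ
    exact Jid_ideal hCtx _
  · apply chain'_map_range
    intro i
    apply Jid_mono
    push_cast
    omega
  · intro k hk1 hk2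
    rw [length_filter_range_map]
    have hcongr : ((Finset.range mN).filter (fun i : ℕ =>
        (decide (((Jid n O g (mN : ℤ) ((i : ℤ) + 1)) ∩ Aset n).card = k)) = true))
        = ((Finset.range mN).filter (fun i : ℕ =>
          ((Jid n O g (mN : ℤ) ((i : ℤ) + 1)) ∩ Aset n).card = k)) := by
      apply Finset.filter_congr
      intro i _
      simp
    rw [hcongr]
    exact count_filter_mid hCtx hdiag hmLk hk1 hk2
  · rw [length_filter_range_map]
    have hcongr : ((Finset.range mN).filter (fun i : ℕ =>
        (decide (((Jid n O g (mN : ℤ) ((i : ℤ) + 1)) ∩ Aset n).card = n)) = true))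
        = ((Finset.range mN).filter (fun i : ℕ =>
          ((Jid n O g (mN : ℤ) ((i : ℤ) + 1)) ∩ Aset n).card = n)) := by
      apply Finset.filter_congr
      intro i _
      simp
    rw [hcongr]
    exact count_filter_top hCtx hdiag hmLk
  · rw [List.length_map, List.length_range]
  · exact Finset.filter_subset _ _
  · intro i hiD
    rw [DsetG, Finset.mem_filter, Finset.mem_Icc] at hiD
    obtain ⟨⟨h1, h2⟩, hodd⟩ := hiD
    have hPi : inP n (i, -i) := inP_of_B h1 h2
    have hOi : ((i, -i) : ℤ × ℤ) ∉ O := fun h => hB _ h rfl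
    have hg1 : 1 ≤ g (i, -i) := by
      have := hnonneg _ hPi
      omega
    have heb := eE_eq_B (n := n) (g := g) (m := (mN : ℤ)) hOi rfl
    have hm1 : 1 ≤ mN := by
      have := eE_ge_one hCtx hPi
      rw [heb] at this
      omega
    refine ⟨Jid n O g (mN : ℤ) (((mN - 1 : ℕ) : ℤ) + 1), ?_, ?_⟩
    · simp only [List.mem_map, List.mem_range]
      exact ⟨mN - 1, by omega, rfl⟩
    · rw [mem_Jid]
      refine ⟨hPi, ?_⟩
      rw [heb]
      omega
  · have hmm := exist_sum_eq hCtx x hg hzero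
    rw [List.map_map]
    exact hmm
  · rintro ⟨L, D'⟩ ⟨hU1, hU2, hU3, hU4, hU5, hU6, hU7, hU8⟩
    have hLlen : L.length = mN := hU5
    have hFid : ∀ i, i < mN → IsIdeal n (L.getD i ∅) := by
      intro i hi
      have hmem : L.getD i ∅ ∈ L := by
        rw [List.getD_eq_getElem L ∅ (show i < L.length by omega)]
        exact List.getElem_mem _
      exact hU1 _ hmem
    have hFmono := chain'_getD_mono hU2
    have heqp : ∀ p, inP n p → (g p : ℝ)
        = (∑ i ∈ Finset.range mN, xJD n O (L.getD i ∅) ∅ p) - yD D' p := by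
      intro p hP
      have h0 := congrFun hU8 p
      rw [hg] at h0
      rw [Pi.sub_apply] at h0
      rw [list_map_sum_range L ∅ (fun J => xJD n O J ∅)] at h0
      rw [hLlen] at h0
      rw [Finset.sum_apply] at h0
      exact h0
    obtain ⟨hmem, hDD⟩ := uniq_core hCtx (fun i => L.getD i ∅) hFid
      (fun i j hij hj => hFmono i j hij (by omega)) D' hU6 heqp
    have hLeq : L = (List.range mN).map (fun i : ℕ => Jid n O g (mN : ℤ) ((i : ℤ) + 1)) := by
      apply List.ext_get
      · rw [hLlen, List.length_map, List.length_range]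
      · intro i h1 h2
        have hi : i < mN := by rw [hLlen] at h1; exact h1
        have hgetJ : ((List.range mN).map
            (fun i : ℕ => Jid n O g (mN : ℤ) ((i : ℤ) + 1))).get ⟨i, h2⟩
            = Jid n O g (mN : ℤ) ((i : ℤ) + 1) := by
          simp
        rw [hgetJ]
        have hFi : L.get ⟨i, h1⟩ = L.getD i ∅ := (List.getD_eq_getElem L ∅ h1).symm
        rw [hFi]
        ext p
        constructor
        · intro hp
          have hPp := (hFid i hi).1 p hp
          rw [mem_Jid]
          exact ⟨hPp, (hmem p hPp i hi).1 hp⟩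
        · intro hp
          rw [mem_Jid] at hp
          exact (hmem p hp.1 i hi).2 hp.2
    rw [Prod.ext_iff]
    exact ⟨hLeq, hDD⟩

end
end

section
/- Fix a total group order < on ℤ^{P∖A} and integral dominant weights λ, μ of a semisimple Lie algebra 𝔤. If d is an essential signature for < and λ, and d' is essential for < and μ, then d + d' is essential for < and λ + μ. -/
open scoped TensorProduct

noncomputable section

/-- Iterated Lie-module action `x^k · v`. -/
def lieIter {L V : Type*} [LieRing L] [AddCommGroup V] [LieRingModule L V]
    (x : L) (k : ℕ) (v : V) : V :=
  (fun w => ⁅x, w⁆)^[k] v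

/-- Action of the ordered PBW monomial `f^d = ∏ f_i^{d_i}` (factors ordered by increasing
index, the leftmost factor acting last). -/
def monAct {L V : Type*} [LieRing L] [AddCommGroup V] [LieRingModule L V]
    {m : ℕ} (f : Fin m → L) (d : Fin m → ℕ) (v : V) : V :=
  (List.finRange m).foldr (fun i w => lieIter (f i) (d i) w) v

/-- `d` is an essential signature for the vector `v` (and the total additive order `r`):
`f^d v` does not lie in the span of the `f^c v`, `c < d`. -/
def Essential {L V : Type*} [LieRing L] [LieAlgebra ℂ L] [AddCommGroup V] [Module ℂ V]
    [LieRingModule L V] [LieModule ℂ L V] {m : ℕ} (f : Fin m → L)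
    (r : (Fin m → ℤ) → (Fin m → ℤ) → Prop) (v : V) (d : Fin m → ℕ) : Prop :=
  monAct f d v ∉ Submodule.span ℂ
    {w : V | ∃ c : Fin m → ℕ,
      r (fun i => (c i : ℤ)) (fun i => (d i : ℤ)) ∧ w = monAct f c v}

section Aux

variable {L : Type*} [LieRing L] [LieAlgebra ℂ L]
variable {V : Type*} [AddCommGroup V] [Module ℂ V] [LieRingModule L V] [LieModule ℂ L V]
variable {W : Type*} [AddCommGroup W] [Module ℂ W] [LieRingModule L W] [LieModule ℂ L W]

lemma lieIter_eq_toEnd (x : L) (k : ℕ) (v : V) :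
    lieIter x k v = ((LieModule.toEnd ℂ L V x) ^ k) v := by
  rw [Module.End.pow_apply]; rfl

/-- Binomial (Leibniz) expansion of the iterated action on a tensor. -/
lemma lieIter_tmul (x : L) (k : ℕ) (v : V) (w : W) :
    lieIter x k (v ⊗ₜ[ℂ] w) =
      ∑ j ∈ Finset.range (k + 1),
        k.choose j • (lieIter x j v ⊗ₜ[ℂ] lieIter x (k - j) w) := by
  set A : Module.End ℂ (V ⊗[ℂ] W) := (LieModule.toEnd ℂ L V x).rTensor W with hA
  set B : Module.End ℂ (V ⊗[ℂ] W) := (LieModule.toEnd ℂ L W x).lTensor V with hB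
  have hEnd : LieModule.toEnd ℂ L (V ⊗[ℂ] W) x = A + B := LinearMap.ext fun t => rfl
  have hcomm : Commute A B := by
    show A * B = B * A
    rw [Module.End.mul_eq_comp, Module.End.mul_eq_comp, hA, hB,
      LinearMap.rTensor_comp_lTensor, LinearMap.lTensor_comp_rTensor]
  rw [lieIter_eq_toEnd, hEnd, hcomm.add_pow, LinearMap.sum_apply]
  refine Finset.sum_congr rfl fun j _ => ?_
  rw [Module.End.mul_apply, Module.End.mul_apply, Module.End.natCast_apply, map_nsmul, map_nsmul]
  congr 1
  rw [hB, LinearMap.lTensor_pow, LinearMap.lTensor_tmul, hA, LinearMap.rTensor_pow,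
    LinearMap.rTensor_tmul, lieIter_eq_toEnd, lieIter_eq_toEnd]

/-- Action of a list of generators. -/
def acts {m : ℕ} (f : Fin m → L) (l : List (Fin m)) (e : Fin m → ℕ) (v : V) : V :=
  l.foldr (fun i w => lieIter (f i) (e i) w) v

lemma monAct_eq_acts {m : ℕ} (f : Fin m → L) (e : Fin m → ℕ) (v : V) :
    monAct f e v = acts f (List.finRange m) e v := rfl

lemma acts_cons {m : ℕ} (f : Fin m → L) (i : Fin m) (l : List (Fin m)) (e : Fin m → ℕ)
    (v : V) : acts f (i :: l) e v = lieIter (f i) (e i) (acts f l e v) := rfl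

lemma acts_congr {m : ℕ} (f : Fin m → L) {l : List (Fin m)} {a b : Fin m → ℕ}
    (v : V) (h : ∀ i ∈ l, a i = b i) : acts f l a v = acts f l b v := by
  induction l with
  | nil => rfl
  | cons i l ih =>
    rw [acts_cons, acts_cons, h i List.mem_cons_self,
      ih fun j hj => h j (List.mem_cons_of_mem _ hj)]

/-- Multinomial expansion of the monomial action on a tensor. -/
lemma acts_tmul {m : ℕ} (f : Fin m → L) (v : V) (w : W) :
    ∀ (l : List (Fin m)), l.Nodup → ∀ (e : Fin m → ℕ),
    ∃ (n : ℕ) (p : Fin n → (Fin m → ℕ) × (Fin m → ℕ)) (c : Fin n → ℕ),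
      (acts f l e (v ⊗ₜ[ℂ] w)
          = ∑ k : Fin n, c k • (acts f l (p k).1 v ⊗ₜ[ℂ] acts f l (p k).2 w))
      ∧ (∀ k, (p k).1 + (p k).2 = e)
      ∧ (∀ k, c k ≠ 0)
      ∧ (∀ a b : Fin m → ℕ, a + b = e → (∀ i, i ∉ l → a i = e i ∧ b i = 0) →
            ∃ k, p k = (a, b)) := by
  intro l
  induction l with
  | nil =>
    intro _ e
    refine ⟨1, fun _ => (e, 0), fun _ => 1, by simp [acts], fun _ => by simp, fun _ => one_ne_zero,
      fun a b hab hp => ⟨0, ?_⟩⟩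
    have ha : a = e := funext fun i => (hp i List.not_mem_nil).1
    have hb : b = 0 := funext fun i => (hp i List.not_mem_nil).2
    rw [ha, hb]
  | cons i l ih =>
    intro hnd e
    have hil : i ∉ l := (List.nodup_cons.mp hnd).1
    obtain ⟨n, p, c, hsum, hdec, hcne, hex⟩ := ih (List.nodup_cons.mp hnd).2 e
    refine ⟨n * (e i + 1),
      fun k => ((Function.update (p (finProdFinEquiv.symm k).1).1 i
          ((finProdFinEquiv.symm k).2 : ℕ)),
        (Function.update (p (finProdFinEquiv.symm k).1).2 i
          (e i - (finProdFinEquiv.symm k).2))),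
      fun k => c (finProdFinEquiv.symm k).1 *
        (e i).choose ((finProdFinEquiv.symm k).2 : ℕ), ?_, ?_, ?_, ?_⟩
    · -- the sum identity
      have lin : ∀ (z : V ⊗[ℂ] W), lieIter (f i) (e i) z
          = ((LieModule.toEnd ℂ L (V ⊗[ℂ] W) (f i)) ^ (e i)) z :=
        fun z => lieIter_eq_toEnd _ _ _
      rw [acts_cons, hsum, lin, map_sum]
      have step : ∀ k : Fin n,
          ((LieModule.toEnd ℂ L (V ⊗[ℂ] W) (f i)) ^ (e i))
              (c k • (acts f l (p k).1 v ⊗ₜ[ℂ] acts f l (p k).2 w))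
            = ∑ j : Fin (e i + 1), (c k * (e i).choose (j : ℕ)) •
                (acts f (i :: l) (Function.update (p k).1 i (j : ℕ)) v ⊗ₜ[ℂ]
                 acts f (i :: l) (Function.update (p k).2 i (e i - (j : ℕ))) w) := by
        intro k
        rw [map_nsmul, ← lin, lieIter_tmul]
        rw [← Fin.sum_univ_eq_sum_range
          (fun j => (e i).choose j • (lieIter (f i) j (acts f l (p k).1 v) ⊗ₜ[ℂ]
            lieIter (f i) (e i - j) (acts f l (p k).2 w))), Finset.smul_sum]
        refine Finset.sum_congr rfl fun j _ => ?_
        rw [smul_smul]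
        have h1 : acts f (i :: l) (Function.update (p k).1 i (j : ℕ)) v
            = lieIter (f i) (j : ℕ) (acts f l (p k).1 v) := by
          rw [acts_cons, Function.update_self]
          congr 1
          exact acts_congr f v fun i' hi' =>
            Function.update_of_ne (fun h : i' = i => hil (h ▸ hi')) _ _
        have h2 : acts f (i :: l) (Function.update (p k).2 i (e i - (j : ℕ))) w
            = lieIter (f i) (e i - (j : ℕ)) (acts f l (p k).2 w) := by
          rw [acts_cons, Function.update_self]
          congr 1
          exact acts_congr f w fun i' hi' =>
            Function.update_of_ne (fun h : i' = i => hil (h ▸ hi')) _ _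
        rw [h1, h2]
      rw [Finset.sum_congr rfl fun k _ => step k]
      refine Eq.trans (Eq.symm (Fintype.sum_prod_type
        (f := fun q : Fin n × Fin (e i + 1) => (c q.1 * (e i).choose (q.2 : ℕ)) •
          (acts f (i :: l) (Function.update (p q.1).1 i (q.2 : ℕ)) v ⊗ₜ[ℂ]
           acts f (i :: l) (Function.update (p q.1).2 i (e i - (q.2 : ℕ))) w)))) ?_
      exact (Equiv.sum_comp finProdFinEquiv.symm
        (fun q : Fin n × Fin (e i + 1) => (c q.1 * (e i).choose (q.2 : ℕ)) •
          (acts f (i :: l) (Function.update (p q.1).1 i (q.2 : ℕ)) v ⊗ₜ[ℂ]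
           acts f (i :: l) (Function.update (p q.1).2 i (e i - (q.2 : ℕ))) w))).symm
    · -- decomposition sums to e
      intro k
      funext i'
      by_cases h : i' = i
      · subst h
        have hle : ((finProdFinEquiv.symm k).2 : ℕ) ≤ e i' :=
          Nat.lt_succ_iff.mp (finProdFinEquiv.symm k).2.isLt
        simp only [Pi.add_apply, Function.update_self]
        exact Nat.add_sub_cancel' hle
      · have := congrFun (hdec (finProdFinEquiv.symm k).1) i'
        simpa [Function.update_of_ne h] using this
    · -- coefficients nonzero
      intro k
      have hle : ((finProdFinEquiv.symm k).2 : ℕ) ≤ e i :=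
        Nat.lt_succ_iff.mp (finProdFinEquiv.symm k).2.isLt
      exact Nat.mul_ne_zero (hcne _) (Nat.choose_pos hle).ne'
    · -- every admissible decomposition occurs
      intro a b hab hp
      have haible : a i ≤ e i := by
        have h0 := congrFun hab i
        simp only [Pi.add_apply] at h0
        omega
      set a' := Function.update a i (e i) with ha'
      set b' := Function.update b i 0 with hb'
      have hab' : a' + b' = e := by
        funext i'
        by_cases h : i' = i
        · subst h; simp [ha', hb', Function.update_self]
        · have := congrFun hab i'
          simpa [ha', hb', Function.update_of_ne h] using this
      have hp' : ∀ i', i' ∉ l → a' i' = e i' ∧ b' i' = 0 := by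
        intro i' hi'
        by_cases h : i' = i
        · subst h; simp [ha', hb', Function.update_self]
        · have := hp i' (by simp [h, hi'])
          simpa [ha', hb', Function.update_of_ne h] using this
      obtain ⟨k, hk⟩ := hex a' b' hab' hp'
      refine ⟨finProdFinEquiv (k, ⟨a i, Nat.lt_succ_of_le haible⟩), ?_⟩
      have hbi : e i - a i = b i := by
        have h0 := congrFun hab i
        simp only [Pi.add_apply] at h0
        omega
      simp only [Equiv.symm_apply_apply, hk, Prod.mk.injEq]
      constructor
      · funext i'
        by_cases h : i' = i
        · subst h; simp
        · simp [ha', Function.update_of_ne h]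
      · funext i'
        by_cases h : i' = i
        · subst h; simp [hbi]
        · simp [hb', Function.update_of_ne h]

end Aux

/-- For a total group order on `ℤ^{P∖A}`: if `d` is essential for `λ` and
`d'` is essential for `μ`, then `d + d'` is essential for `λ + μ` (essentiality for
`λ + μ` tested inside `V_{λ+μ} ⊆ V_λ ⊗ V_μ` with `v_{λ+μ} = v_λ ⊗ v_μ`). -/
theorem stmt16 {L : Type*} [LieRing L] [LieAlgebra ℂ L] [LieAlgebra.IsSemisimple ℂ L]
    {V W : Type*} [AddCommGroup V] [Module ℂ V] [LieRingModule L V] [LieModule ℂ L V]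
    [AddCommGroup W] [Module ℂ W] [LieRingModule L W] [LieModule ℂ L W]
    {m : ℕ} (f : Fin m → L)
    (r : (Fin m → ℤ) → (Fin m → ℤ) → Prop)
    (hr : IsStrictTotalOrder (Fin m → ℤ) r)
    (hradd : ∀ a b c : Fin m → ℤ, r a b → r (a + c) (b + c))
    (v : V) (w : W) (d d' : Fin m → ℕ)
    (hd : Essential f r v d) (hd' : Essential f r w d') :
    Essential f r (v ⊗ₜ[ℂ] w) (d + d') := by
  classical
  -- cancellation in the group order
  have hcancel : ∀ X Y Z : Fin m → ℤ, r (Z + X) (Z + Y) → r X Y := by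
    intro X Y Z h
    have h2 := hradd _ _ (-Z) h
    have e1 : Z + X + -Z = X := by abel
    have e2 : Z + Y + -Z = Y := by abel
    rwa [e1, e2] at h2
  -- the key case analysis on decompositions
  have hsplit : ∀ a b e : Fin m → ℕ, a + b = e →
      (r (fun i => (e i : ℤ)) (fun i => ((d + d') i : ℤ)) ∨
        (e = d + d' ∧ (a, b) ≠ (d, d'))) →
      r (fun i => (a i : ℤ)) (fun i => (d i : ℤ)) ∨
        r (fun i => (b i : ℤ)) (fun i => (d' i : ℤ)) := by
    intro a b e habe hcase
    have hE : (fun i => (e i : ℤ)) = (fun i => (a i : ℤ)) + fun i => (b i : ℤ) := by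
      funext i
      have h0 := congrFun habe i
      simp only [Pi.add_apply] at h0 ⊢
      omega
    have hDD : (fun i => ((d + d') i : ℤ)) = (fun i => (d i : ℤ)) + fun i => (d' i : ℤ) := by
      funext i; simp [Pi.add_apply]
    rcases @trichotomous _ r hr.toTrichotomous (fun i => (a i : ℤ)) (fun i => (d i : ℤ))
      with h | h | h
    · exact Or.inl h
    · -- a = d
      have had : a = d := by
        funext i
        exact_mod_cast congrFun h i
      right
      rcases hcase with hre | ⟨h1, hne⟩
      · rw [hE, h, hDD] at hre
        exact hcancel _ _ _ hre
      · exfalso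
        apply hne
        have hbd : b = d' := by
          funext i
          have h2 := congrFun habe i
          have h3 := congrFun h1 i
          have h4 := congrFun had i
          simp only [Pi.add_apply] at h2 h3
          omega
        rw [had, hbd]
    · -- d < a, hence b < d'
      right
      have hstep := hradd _ _ (fun i => (b i : ℤ)) h
      have hfin : r ((fun i => (d i : ℤ)) + fun i => (b i : ℤ))
          ((fun i => (d i : ℤ)) + fun i => (d' i : ℤ)) := by
        rcases hcase with hre | ⟨h1, hne⟩
        · rw [hE, hDD] at hre
          exact hr.toIsStrictOrder.toIsTrans.trans _ _ _ hstep hre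
        · rw [← hE, h1, hDD] at hstep
          exact hstep
      exact hcancel _ _ _ hfin
  set SV : Submodule ℂ V := Submodule.span ℂ
    {z : V | ∃ c : Fin m → ℕ,
      r (fun i => (c i : ℤ)) (fun i => (d i : ℤ)) ∧ z = monAct f c v} with hSV
  set SW : Submodule ℂ W := Submodule.span ℂ
    {z : W | ∃ c : Fin m → ℕ,
      r (fun i => (c i : ℤ)) (fun i => (d' i : ℤ)) ∧ z = monAct f c w} with hSW
  have hxV : monAct f d v ∉ SV := hd
  have hxW : monAct f d' w ∉ SW := hd'
  set Q : V ⊗[ℂ] W →ₗ[ℂ] (V ⧸ SV) ⊗[ℂ] (W ⧸ SW) :=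
    TensorProduct.map SV.mkQ SW.mkQ with hQ
  have hQtmul : ∀ a b : Fin m → ℕ,
      (r (fun i => (a i : ℤ)) (fun i => (d i : ℤ)) ∨
        r (fun i => (b i : ℤ)) (fun i => (d' i : ℤ))) →
      Q (monAct f a v ⊗ₜ[ℂ] monAct f b w) = 0 := by
    intro a b hab
    rw [hQ, TensorProduct.map_tmul]
    rcases hab with h | h
    · have h0 : SV.mkQ (monAct f a v) = 0 := by
        rw [Submodule.mkQ_apply, Submodule.Quotient.mk_eq_zero]
        exact Submodule.subset_span ⟨a, h, rfl⟩
      rw [h0, TensorProduct.zero_tmul]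
    · have h0 : SW.mkQ (monAct f b w) = 0 := by
        rw [Submodule.mkQ_apply, Submodule.Quotient.mk_eq_zero]
        exact Submodule.subset_span ⟨b, h, rfl⟩
      rw [h0, TensorProduct.tmul_zero]
  intro hmem
  -- everything in the span is killed by Q
  have hker : Submodule.span ℂ
      {z : V ⊗[ℂ] W | ∃ c0 : Fin m → ℕ,
        r (fun i => (c0 i : ℤ)) (fun i => ((d + d') i : ℤ)) ∧
          z = monAct f c0 (v ⊗ₜ[ℂ] w)} ≤ LinearMap.ker Q := by
    rw [Submodule.span_le]
    rintro z ⟨e, he, rfl⟩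
    rw [SetLike.mem_coe, LinearMap.mem_ker]
    obtain ⟨n, p, c, hsum, hdec, hcne, hex⟩ :=
      acts_tmul f v w (List.finRange m) (List.nodup_finRange m) e
    rw [monAct_eq_acts, hsum, map_sum]
    refine Finset.sum_eq_zero fun k _ => ?_
    rw [map_nsmul]
    have h1 := hsplit (p k).1 (p k).2 e (hdec k) (Or.inl he)
    have h2 := hQtmul (p k).1 (p k).2 h1
    rw [show acts f (List.finRange m) (p k).1 v = monAct f (p k).1 v from rfl,
      show acts f (List.finRange m) (p k).2 w = monAct f (p k).2 w from rfl, h2, smul_zero]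
  have hQ0 : Q (monAct f (d + d') (v ⊗ₜ[ℂ] w)) = 0 := LinearMap.mem_ker.mp (hker hmem)
  -- expansion of the big monomial
  obtain ⟨n, p, c, hsum, hdec, hcne, hex⟩ :=
    acts_tmul f v w (List.finRange m) (List.nodup_finRange m) (d + d')
  set T : (V ⧸ SV) ⊗[ℂ] (W ⧸ SW) :=
    SV.mkQ (monAct f d v) ⊗ₜ[ℂ] SW.mkQ (monAct f d' w) with hT
  have hQall : Q (monAct f (d + d') (v ⊗ₜ[ℂ] w))
      = (∑ k ∈ Finset.univ.filter (fun k => p k = (d, d')), c k) • T := by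
    have expand : Q (monAct f (d + d') (v ⊗ₜ[ℂ] w))
        = ∑ k : Fin n, c k • Q (monAct f (p k).1 v ⊗ₜ[ℂ] monAct f (p k).2 w) := by
      rw [monAct_eq_acts, hsum, map_sum]
      exact Finset.sum_congr rfl fun k _ => map_nsmul Q _ _
    rw [expand, ← Finset.sum_filter_add_sum_filter_not Finset.univ (fun k => p k = (d, d'))]
    have hz : ∑ k ∈ Finset.univ.filter (fun k => ¬ p k = (d, d')),
        c k • Q (monAct f (p k).1 v ⊗ₜ[ℂ] monAct f (p k).2 w) = 0 :=
      Finset.sum_eq_zero fun k hk => by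
        have hne : ((p k).1, (p k).2) ≠ (d, d') := by
          simpa using (Finset.mem_filter.mp hk).2
        rw [hQtmul _ _ (hsplit (p k).1 (p k).2 (d + d') (hdec k) (Or.inr ⟨rfl, hne⟩)),
          smul_zero]
    have hdiag : ∑ k ∈ Finset.univ.filter (fun k => p k = (d, d')),
        c k • Q (monAct f (p k).1 v ⊗ₜ[ℂ] monAct f (p k).2 w)
        = ∑ k ∈ Finset.univ.filter (fun k => p k = (d, d')), c k • T :=
      Finset.sum_congr rfl fun k hk => by
        have h1 := (Finset.mem_filter.mp hk).2
        rw [h1, hQ, TensorProduct.map_tmul, hT]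
    rw [hz, add_zero, hdiag]
    exact (Finset.sum_smul).symm
  have hN : (∑ k ∈ Finset.univ.filter (fun k => p k = (d, d')), c k) ≠ 0 := by
    obtain ⟨k0, hk0⟩ := hex d d' rfl (fun i hi => absurd (List.mem_finRange i) hi)
    have hk0mem : k0 ∈ Finset.univ.filter (fun k => p k = (d, d')) :=
      Finset.mem_filter.mpr ⟨Finset.mem_univ _, hk0⟩
    have hle := Finset.single_le_sum (f := c) (fun _ _ => Nat.zero_le _) hk0mem
    have := hcne k0
    omega
  have hT0 : T = 0 := by
    rw [hQall] at hQ0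
    rw [← Nat.cast_smul_eq_nsmul ℂ] at hQ0
    exact (smul_eq_zero.mp hQ0).resolve_left (Nat.cast_ne_zero.mpr hN)
  -- but T ≠ 0
  have hx : SV.mkQ (monAct f d v) ≠ 0 := by
    rw [Submodule.mkQ_apply, Ne, Submodule.Quotient.mk_eq_zero]
    exact hxV
  have hy : SW.mkQ (monAct f d' w) ≠ 0 := by
    rw [Submodule.mkQ_apply, Ne, Submodule.Quotient.mk_eq_zero]
    exact hxW
  obtain ⟨φ, hφ⟩ : ∃ φ : Module.Dual ℂ (V ⧸ SV), φ (SV.mkQ (monAct f d v)) ≠ 0 := by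
    by_contra h
    push_neg at h
    exact hx ((Module.forall_dual_apply_eq_zero_iff ℂ _).mp h)
  have hzero := congrArg
    (fun z => (TensorProduct.lid ℂ (W ⧸ SW)) ((φ.rTensor (W ⧸ SW)) z)) hT0
  simp only [hT, LinearMap.rTensor_tmul, TensorProduct.lid_tmul, map_zero,
    LinearEquiv.map_zero] at hzero
  exact hy ((smul_eq_zero.mp hzero).resolve_left hφ)

end
end
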